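/- arXiv:2106.13003 — 4 statements merged into one kernel-verified Lean document; each statement's English description precedes it below -/
import Mathlib

section
/- Let $\mathbb{C}_v$ be a complete algebraically closed non-archimedean field, let $D = \{z : |z - a|_v \leq r\}$ be a closed disk, and let $\phi \in \mathbb{C}_v[z]$ be a polynomial of degree $d \geq 1$. Then $\phi^{-1}(D)$ is a disjoint union of closed disks $D_1, \ldots, D_m$ with $1 \leq m \leq d$, and for each $i$ there is an integer $1 \leq d_i \leq d$ such that every point of $D$ has exactly $d_i$ preimages in $D_i$ counted with multiplicity, with $d_1 + \cdots + d_m = d$. -/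
set_option linter.unusedSectionVars false
set_option maxHeartbeats 1600000
open Polynomial Metric

section Helpers
variable {Cv : Type*} [NormedField Cv] [IsUltrametricDist Cv]

lemma ultra_three (x y z : Cv) : ‖x - z‖ ≤ max ‖x - y‖ ‖y - z‖ := by
  rw [show x - z = (x - y) + (y - z) by ring]
  exact IsUltrametricDist.norm_add_le_max _ _


lemma ultra_sub_le (x y : Cv) : ‖x - y‖ ≤ max ‖x‖ ‖y‖ := by
  simpa [sub_eq_add_neg] using IsUltrametricDist.norm_add_le_max x (-y)

lemma ultra_sub_eq_left {x y : Cv} (h : ‖y‖ < ‖x‖) : ‖x - y‖ = ‖x‖ := by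
  apply le_antisymm ((ultra_sub_le x y).trans (by simp [le_of_lt h]))
  have h2 : ‖x‖ ≤ max ‖x - y‖ ‖y‖ := by
    calc ‖x‖ = ‖(x - y) + y‖ := by ring_nf
      _ ≤ max ‖x - y‖ ‖y‖ := IsUltrametricDist.norm_add_le_max _ _
  rcases max_cases ‖x - y‖ ‖y‖ with ⟨he, _⟩|⟨he, _⟩
  · rwa [he] at h2
  · rw [he] at h2; linarith

lemma ultra_sub_eq_right {x y : Cv} (h : ‖x‖ < ‖y‖) : ‖x - y‖ = ‖y‖ := by
  rw [show x - y = -(y - x) by ring, norm_neg, ultra_sub_eq_left h]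


lemma mprod_pos {M : Multiset Cv} {f : Cv → ℝ} (h : ∀ x ∈ M, 0 < f x) :
    0 < (M.map f).prod := by
  induction M using Multiset.induction_on with
  | empty => simp
  | cons y M ih =>
    rw [Multiset.map_cons, Multiset.prod_cons]
    exact mul_pos (h y (Multiset.mem_cons_self _ _))
      (ih fun x hx => h x (Multiset.mem_cons_of_mem hx))

lemma mprod_nonneg {M : Multiset Cv} {f : Cv → ℝ} (h : ∀ x ∈ M, 0 ≤ f x) :
    0 ≤ (M.map f).prod := by
  induction M using Multiset.induction_on with
  | empty => simp
  | cons y M ih =>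
    rw [Multiset.map_cons, Multiset.prod_cons]
    exact mul_nonneg (h y (Multiset.mem_cons_self _ _))
      (ih fun x hx => h x (Multiset.mem_cons_of_mem hx))

lemma mprod_le_mprod {M : Multiset Cv} {f g : Cv → ℝ} (h0 : ∀ x ∈ M, 0 ≤ f x)
    (h : ∀ x ∈ M, f x ≤ g x) : (M.map f).prod ≤ (M.map g).prod := by
  induction M using Multiset.induction_on with
  | empty => simp
  | cons y M ih =>
    rw [Multiset.map_cons, Multiset.prod_cons, Multiset.map_cons, Multiset.prod_cons]
    have hy0 := h0 y (Multiset.mem_cons_self _ _)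
    have hy := h y (Multiset.mem_cons_self _ _)
    have h0' : ∀ x ∈ M, 0 ≤ f x := fun x hx => h0 x (Multiset.mem_cons_of_mem hx)
    have h' : ∀ x ∈ M, f x ≤ g x := fun x hx => h x (Multiset.mem_cons_of_mem hx)
    have hMf : (0:ℝ) ≤ (M.map f).prod := mprod_nonneg h0'
    have hMg : (0:ℝ) ≤ (M.map g).prod := mprod_nonneg fun x hx => (h0' x hx).trans (h' x hx)
    exact mul_le_mul hy (ih h0' h') hMf (hy0.trans hy)

lemma mprod_norm (M : Multiset Cv) (f : Cv → Cv) :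
    ‖(M.map f).prod‖ = (M.map fun x => ‖f x‖).prod := by
  induction M using Multiset.induction_on with
  | empty => simp
  | cons y M ih => simp [Multiset.map_cons, Multiset.prod_cons, norm_mul, ih]

lemma pow_le_mprod {M : Multiset Cv} {f : Cv → ℝ} {s : ℝ} (hs : 0 ≤ s)
    (h : ∀ x ∈ M, s ≤ f x) : s ^ Multiset.card M ≤ (M.map f).prod := by
  induction M using Multiset.induction_on with
  | empty => simp
  | cons y M ih =>
    rw [Multiset.map_cons, Multiset.prod_cons, Multiset.card_cons, pow_succ]
    rw [mul_comm (s ^ Multiset.card M) s]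
    exact mul_le_mul (h y (Multiset.mem_cons_self _ _))
      (ih fun x hx => h x (Multiset.mem_cons_of_mem hx)) (pow_nonneg hs _)
      (hs.trans (h y (Multiset.mem_cons_self _ _)))

lemma mprod_cont (M : Multiset Cv) (α : Cv) :
    Continuous fun s : ℝ => (M.map fun γ => max s ‖γ - α‖).prod := by
  induction M using Multiset.induction_on with
  | empty => simpa using continuous_const
  | cons y M ih =>
    simp only [Multiset.map_cons, Multiset.prod_cons]
    exact (continuous_id.max continuous_const).mul ih

open Classical in
lemma keyA (ρ : ℝ) (hρ : 0 < ρ) (M : Multiset Cv) :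
    (∀ j, ‖((M.map fun β => X - C β).prod).coeff j‖ * ρ ^ j
        ≤ (M.map fun β => max ρ ‖β‖).prod) ∧
    ‖((M.map fun β => X - C β).prod).coeff (Multiset.card (M.filter (fun β => ‖β‖ ≤ ρ)))‖
        * ρ ^ (Multiset.card (M.filter (fun β => ‖β‖ ≤ ρ)))
        = (M.map fun β => max ρ ‖β‖).prod ∧
    (∀ j, Multiset.card (M.filter (fun β => ‖β‖ ≤ ρ)) < j →
      ‖((M.map fun β => X - C β).prod).coeff j‖ * ρ ^ j
        < (M.map fun β => max ρ ‖β‖).prod) := by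
  induction M using Multiset.induction_on with
  | empty =>
    simp only [Multiset.map_zero, Multiset.prod_zero, Multiset.filter_zero, Multiset.card_zero]
    refine ⟨fun j => ?_, by simp, fun j hj => ?_⟩
    · rcases Nat.eq_zero_or_pos j with rfl|hj
      · simp
      · have h1 : (1 : Polynomial Cv).coeff j = 0 := by
          rw [Polynomial.coeff_one]; simp [Nat.pos_iff_ne_zero.mp hj]
        simp [h1]
    · have h1 : (1 : Polynomial Cv).coeff j = 0 := by
        rw [Polynomial.coeff_one]; simp [Nat.pos_iff_ne_zero.mp hj]
      simp [h1]
  | cons β M ih =>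
    obtain ⟨hb, ha, hc⟩ := ih
    set f : Polynomial Cv := (M.map fun b => X - C b).prod with hf
    set G : ℝ := (M.map fun b => max ρ ‖b‖).prod with hG
    set n : ℕ := Multiset.card (M.filter (fun b => ‖b‖ ≤ ρ)) with hn
    have hG0 : 0 < G := mprod_pos fun x _ => lt_of_lt_of_le hρ (le_max_left _ _)
    clear_value n
    have hprod : ((β ::ₘ M).map fun b => X - C b).prod = (X - C β) * f := by
      rw [Multiset.map_cons, Multiset.prod_cons]
    have hGcons : ((β ::ₘ M).map fun b => max ρ ‖b‖).prod = max ρ ‖β‖ * G := by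
      rw [Multiset.map_cons, Multiset.prod_cons]
    have hc0 : ((X - C β) * f).coeff 0 = -(β * f.coeff 0) := by
      rw [Polynomial.mul_coeff_zero]
      simp [Polynomial.coeff_X_zero]
    have hcS : ∀ j, ((X - C β) * f).coeff (j+1) = f.coeff j - β * f.coeff (j+1) := by
      intro j
      rw [sub_mul, Polynomial.coeff_sub, Polynomial.coeff_X_mul, Polynomial.coeff_C_mul]
    rcases le_or_gt ‖β‖ ρ with hβρ | hβρ
    · -- small root case
      have hmax : max ρ ‖β‖ = ρ := max_eq_left hβρ
      have hfn : Multiset.card ((β ::ₘ M).filter (fun b => ‖b‖ ≤ ρ)) = n + 1 := by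
        rw [Multiset.filter_cons_of_pos _ (by exact hβρ), Multiset.card_cons, ← hn]
      rw [hprod, hGcons, hmax, hfn]
      have bound : ∀ j, ‖((X - C β) * f).coeff j‖ * ρ ^ j ≤ ρ * G := by
        intro j
        cases j with
        | zero =>
          rw [hc0]
          simp only [norm_neg, norm_mul, pow_zero, mul_one]
          have h0 : ‖f.coeff 0‖ ≤ G := by simpa using hb 0
          exact mul_le_mul hβρ h0 (norm_nonneg _) (le_of_lt hρ)
        | succ j =>
          rw [hcS j]
          have h1 : ‖f.coeff j - β * f.coeff (j+1)‖ ≤ max ‖f.coeff j‖ (‖β‖ * ‖f.coeff (j+1)‖) := by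
            simpa [norm_mul] using ultra_sub_le (f.coeff j) (β * f.coeff (j+1))
          have hpow : (0:ℝ) < ρ ^ (j+1) := pow_pos hρ _
          rcases max_cases ‖f.coeff j‖ (‖β‖ * ‖f.coeff (j+1)‖) with ⟨he, _⟩|⟨he, _⟩
          · rw [he] at h1
            have := hb j
            calc ‖f.coeff j - β * f.coeff (j+1)‖ * ρ^(j+1)
                ≤ ‖f.coeff j‖ * ρ^(j+1) := by nlinarith
              _ = (‖f.coeff j‖ * ρ^j) * ρ := by ring
              _ ≤ G * ρ := by nlinarith
              _ = ρ * G := by ring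
          · rw [he] at h1
            have h2 := hb (j+1)
            calc ‖f.coeff j - β * f.coeff (j+1)‖ * ρ^(j+1)
                ≤ (‖β‖ * ‖f.coeff (j+1)‖) * ρ^(j+1) := by nlinarith
              _ = ‖β‖ * (‖f.coeff (j+1)‖ * ρ^(j+1)) := by ring
              _ ≤ ρ * G := by
                  apply mul_le_mul hβρ h2 (by positivity) (le_of_lt hρ)
      refine ⟨bound, ?_, ?_⟩
      · -- equality at n+1
        rw [hcS n]
        have hlt : ‖β * f.coeff (n+1)‖ < ‖f.coeff n‖ := by
          have h2 := hc (n+1) (Nat.lt_succ_self n)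
          -- ‖f.coeff (n+1)‖ * ρ^(n+1) < G = ‖f.coeff n‖ * ρ^n
          rw [← ha] at h2
          have hpown : (0:ℝ) < ρ ^ n := pow_pos hρ _
          rw [norm_mul]
          have : ‖f.coeff (n+1)‖ * ρ ^ (n+1) = (‖f.coeff (n+1)‖ * ρ) * ρ ^ n := by ring
          rw [this] at h2
          have h3 : ‖f.coeff (n+1)‖ * ρ < ‖f.coeff n‖ := lt_of_mul_lt_mul_right h2 (le_of_lt hpown)
          calc ‖β‖ * ‖f.coeff (n+1)‖ ≤ ρ * ‖f.coeff (n+1)‖ := by nlinarith [norm_nonneg (f.coeff (n+1))]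
            _ < ‖f.coeff n‖ := by nlinarith
        rw [ultra_sub_eq_left hlt]
        calc ‖f.coeff n‖ * ρ ^ (n+1) = (‖f.coeff n‖ * ρ^n) * ρ := by ring
          _ = G * ρ := by rw [ha]
          _ = ρ * G := by ring
      · -- strict for j > n+1
        intro j hj
        obtain ⟨k, rfl⟩ : ∃ k, j = k + 1 := ⟨j - 1, by omega⟩
        have hk : n < k := by omega
        rw [hcS k]
        have h1 : ‖f.coeff k - β * f.coeff (k+1)‖ ≤ max ‖f.coeff k‖ (‖β‖ * ‖f.coeff (k+1)‖) := by
          simpa [norm_mul] using ultra_sub_le (f.coeff k) (β * f.coeff (k+1))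
        have hpow : (0:ℝ) < ρ ^ (k+1) := pow_pos hρ _
        have hck := hc k hk
        have hck1 := hc (k+1) (by omega)
        rcases max_cases ‖f.coeff k‖ (‖β‖ * ‖f.coeff (k+1)‖) with ⟨he, _⟩|⟨he, _⟩
        · rw [he] at h1
          calc ‖f.coeff k - β * f.coeff (k+1)‖ * ρ^(k+1)
              ≤ ‖f.coeff k‖ * ρ^(k+1) := by nlinarith
            _ = (‖f.coeff k‖ * ρ^k) * ρ := by ring
            _ < G * ρ := by nlinarith
            _ = ρ * G := by ring
        · rw [he] at h1
          calc ‖f.coeff k - β * f.coeff (k+1)‖ * ρ^(k+1)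
              ≤ (‖β‖ * ‖f.coeff (k+1)‖) * ρ^(k+1) := by nlinarith
            _ = ‖β‖ * (‖f.coeff (k+1)‖ * ρ^(k+1)) := by ring
            _ ≤ ρ * (‖f.coeff (k+1)‖ * ρ^(k+1)) := by nlinarith [norm_nonneg (f.coeff (k+1)), mul_nonneg (norm_nonneg (f.coeff (k+1))) (le_of_lt hpow)]
            _ < ρ * G := by nlinarith
    · -- big root case
      have hmax : max ρ ‖β‖ = ‖β‖ := max_eq_right (le_of_lt hβρ)
      have hfn : Multiset.card ((β ::ₘ M).filter (fun b => ‖b‖ ≤ ρ)) = n := by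
        rw [Multiset.filter_cons_of_neg _ (by exact not_le.mpr hβρ)]; exact hn.symm
      rw [hprod, hGcons, hmax, hfn]
      have hbpos : (0:ℝ) < ‖β‖ := lt_trans hρ hβρ
      refine ⟨?_, ?_, ?_⟩
      · intro j
        cases j with
        | zero =>
          rw [hc0]
          simp only [norm_neg, norm_mul, pow_zero, mul_one]
          have h0 : ‖f.coeff 0‖ ≤ G := by simpa using hb 0
          nlinarith
        | succ j =>
          rw [hcS j]
          have h1 : ‖f.coeff j - β * f.coeff (j+1)‖ ≤ max ‖f.coeff j‖ (‖β‖ * ‖f.coeff (j+1)‖) := by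
            simpa [norm_mul] using ultra_sub_le (f.coeff j) (β * f.coeff (j+1))
          have hpow : (0:ℝ) < ρ ^ (j+1) := pow_pos hρ _
          have hbj := hb j
          have hbj1 := hb (j+1)
          rcases max_cases ‖f.coeff j‖ (‖β‖ * ‖f.coeff (j+1)‖) with ⟨he, _⟩|⟨he, _⟩
          · rw [he] at h1
            calc ‖f.coeff j - β * f.coeff (j+1)‖ * ρ^(j+1)
                ≤ ‖f.coeff j‖ * ρ^(j+1) := by nlinarith
              _ = (‖f.coeff j‖ * ρ^j) * ρ := by ring
              _ ≤ G * ρ := by nlinarith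
              _ ≤ ‖β‖ * G := by nlinarith
          · rw [he] at h1
            calc ‖f.coeff j - β * f.coeff (j+1)‖ * ρ^(j+1)
                ≤ (‖β‖ * ‖f.coeff (j+1)‖) * ρ^(j+1) := by nlinarith
              _ = ‖β‖ * (‖f.coeff (j+1)‖ * ρ^(j+1)) := by ring
              _ ≤ ‖β‖ * G := by nlinarith
      · -- equality at n
        cases n with
        | zero =>
          rw [hc0]
          simp only [norm_neg, norm_mul, pow_zero, mul_one]
          have h0 : ‖f.coeff 0‖ = G := by simpa using ha
          rw [h0]
        | succ j =>
          rw [hcS j]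
          have hAj1 : ‖f.coeff (j+1)‖ * ρ^(j+1) = G := ha
          have hAj : ‖f.coeff j‖ * ρ^j ≤ G := hb j
          have hpow : (0:ℝ) < ρ ^ (j+1) := pow_pos hρ _
          have hlt : ‖f.coeff j‖ < ‖β * f.coeff (j+1)‖ := by
            rw [norm_mul]
            have h1 : ‖f.coeff j‖ * ρ^(j+1) ≤ G * ρ := by
              have : ‖f.coeff j‖ * ρ^(j+1) = (‖f.coeff j‖ * ρ^j) * ρ := by ring
              rw [this]; nlinarith
            have h2 : (‖β‖ * ‖f.coeff (j+1)‖) * ρ^(j+1) = ‖β‖ * G := by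
              rw [mul_assoc, hAj1]
            have h3 : G * ρ < ‖β‖ * G := by nlinarith
            have h4 : ‖f.coeff j‖ * ρ^(j+1) < (‖β‖ * ‖f.coeff (j+1)‖) * ρ^(j+1) := by
              rw [h2]; linarith
            exact lt_of_mul_lt_mul_right h4 (le_of_lt hpow)
          rw [ultra_sub_eq_right hlt, norm_mul]
          calc ‖β‖ * ‖f.coeff (j+1)‖ * ρ^(j+1) = ‖β‖ * (‖f.coeff (j+1)‖ * ρ^(j+1)) := by ring
            _ = ‖β‖ * G := by rw [hAj1]
      · -- strict for j > n
        intro j hj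
        obtain ⟨k, rfl⟩ : ∃ k, j = k + 1 := ⟨j - 1, by omega⟩
        have hk : n ≤ k := by omega
        rw [hcS k]
        have h1 : ‖f.coeff k - β * f.coeff (k+1)‖ ≤ max ‖f.coeff k‖ (‖β‖ * ‖f.coeff (k+1)‖) := by
          simpa [norm_mul] using ultra_sub_le (f.coeff k) (β * f.coeff (k+1))
        have hpow : (0:ℝ) < ρ ^ (k+1) := pow_pos hρ _
        have hbk := hb k
        have hck1 := hc (k+1) (by omega)
        rcases max_cases ‖f.coeff k‖ (‖β‖ * ‖f.coeff (k+1)‖) with ⟨he, _⟩|⟨he, _⟩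
        · rw [he] at h1
          calc ‖f.coeff k - β * f.coeff (k+1)‖ * ρ^(k+1)
              ≤ ‖f.coeff k‖ * ρ^(k+1) := by nlinarith
            _ = (‖f.coeff k‖ * ρ^k) * ρ := by ring
            _ ≤ G * ρ := by nlinarith
            _ < ‖β‖ * G := by nlinarith
        · rw [he] at h1
          calc ‖f.coeff k - β * f.coeff (k+1)‖ * ρ^(k+1)
              ≤ (‖β‖ * ‖f.coeff (k+1)‖) * ρ^(k+1) := by nlinarith
            _ = ‖β‖ * (‖f.coeff (k+1)‖ * ρ^(k+1)) := by ring
            _ < ‖β‖ * G := by nlinarith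

open Classical in
lemma count_eq (Ma Mw : Multiset Cv) {ρ r : ℝ} (hρ : 0 < ρ)
    (hG : (Ma.map fun β => max ρ ‖β‖).prod = r)
    (hn : 1 ≤ Multiset.card (Ma.filter fun β => ‖β‖ ≤ ρ))
    {u : Cv} (hu : ‖u‖ ≤ r)
    (heq : (Mw.map fun β => X - C β).prod = (Ma.map fun β => X - C β).prod + C u) :
    Multiset.card (Mw.filter fun β => ‖β‖ ≤ ρ)
      = Multiset.card (Ma.filter fun β => ‖β‖ ≤ ρ) := by
  obtain ⟨ba, aa, ca⟩ := keyA ρ hρ Ma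
  obtain ⟨bw, aw, cw⟩ := keyA ρ hρ Mw
  set fa : Polynomial Cv := (Ma.map fun β => X - C β).prod with hfa
  set fw : Polynomial Cv := (Mw.map fun β => X - C β).prod with hfw
  set na : ℕ := Multiset.card (Ma.filter fun β => ‖β‖ ≤ ρ) with hna
  set nw : ℕ := Multiset.card (Mw.filter fun β => ‖β‖ ≤ ρ) with hnw
  set Gw : ℝ := (Mw.map fun β => max ρ ‖β‖).prod with hGw
  rw [hG] at ba aa ca
  have hr : 0 < r := by
    rw [← hG]; exact mprod_pos fun x _ => lt_of_lt_of_le hρ (le_max_left _ _)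
  have hcoeff : ∀ j, 1 ≤ j → fw.coeff j = fa.coeff j := by
    intro j hj
    rw [heq, Polynomial.coeff_add, Polynomial.coeff_C, if_neg (by omega)]
    ring
  have hcoeff0 : fw.coeff 0 = fa.coeff 0 + u := by
    rw [heq, Polynomial.coeff_add, Polynomial.coeff_C, if_pos rfl]
  rcases lt_trichotomy nw na with h | h | h
  · exfalso
    have hGwle : Gw ≤ r := by
      rw [← aw]
      rcases Nat.eq_zero_or_pos nw with h0 | h0
      · rw [h0]
        simp only [pow_zero, mul_one, hcoeff0]
        calc ‖fa.coeff 0 + u‖ ≤ max ‖fa.coeff 0‖ ‖u‖ := IsUltrametricDist.norm_add_le_max _ _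
          _ ≤ r := max_le (by simpa using ba 0) hu
      · rw [hcoeff nw h0]
        exact ba nw
    have hlt : ‖fw.coeff na‖ * ρ ^ na < Gw := cw na h
    rw [hcoeff na hn, aa] at hlt
    linarith
  · exact h
  · exfalso
    have hGwge : r ≤ Gw := by
      have := bw na
      rw [hcoeff na hn, aa] at this
      exact this
    have hlt : ‖fw.coeff nw‖ * ρ ^ nw < r := by
      have := ca nw h
      rwa [← hcoeff nw (le_trans hn (le_of_lt h))] at this
    rw [aw] at hlt
    linarith

lemma gmono (M : Multiset Cv) (α : Cv) (hα : α ∈ M) {s t : ℝ} (hs : 0 < s) (hst : s < t) :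
    (M.map fun γ => max s ‖γ - α‖).prod < (M.map fun γ => max t ‖γ - α‖).prod := by
  classical
  obtain ⟨M', rfl⟩ : ∃ M', M = α ::ₘ M' := ⟨M.erase α, (Multiset.cons_erase hα).symm⟩
  simp only [Multiset.map_cons, Multiset.prod_cons, sub_self, norm_zero,
    max_eq_left hs.le, max_eq_left (hs.trans hst).le]
  have hPmono : (M'.map fun γ => max s ‖γ - α‖).prod ≤ (M'.map fun γ => max t ‖γ - α‖).prod :=
    mprod_le_mprod (fun x _ => le_max_of_le_left hs.le)
      (fun x _ => max_le_max hst.le le_rfl)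
  have hPt : 0 < (M'.map fun γ => max t ‖γ - α‖).prod :=
    mprod_pos fun x _ => lt_of_lt_of_le (hs.trans hst) (le_max_left _ _)
  calc s * (M'.map fun γ => max s ‖γ - α‖).prod
      ≤ s * (M'.map fun γ => max t ‖γ - α‖).prod := by nlinarith
    _ < t * (M'.map fun γ => max t ‖γ - α‖).prod := by nlinarith

lemma exists_rho (M : Multiset Cv) (α : Cv) (hα : α ∈ M) {c r : ℝ} (hc : 0 < c) (hr : 0 < r) :
    ∃ ρ : ℝ, 0 < ρ ∧ c * (M.map fun γ => max ρ ‖γ - α‖).prod = r := by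
  classical
  set g : ℝ → ℝ := fun s => c * (M.map fun γ => max s ‖γ - α‖).prod with hg
  have hgc : Continuous g := continuous_const.mul (mprod_cont M α)
  set K : ℝ := c * ((M.erase α).map fun γ => max 1 ‖γ - α‖).prod + 1 with hK
  have hK1 : 0 < c * ((M.erase α).map fun γ => max 1 ‖γ - α‖).prod :=
    mul_pos hc (mprod_pos fun x _ => lt_of_lt_of_le one_pos (le_max_left _ _))
  have hK0 : 0 < K := by positivity
  set s₀ : ℝ := min 1 (r / K) with hs₀def
  have hs₀ : 0 < s₀ := lt_min one_pos (by positivity)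
  have hs₀le1 : s₀ ≤ 1 := min_le_left _ _
  have hlow : g s₀ ≤ r := by
    have hMeq : M = α ::ₘ M.erase α := (Multiset.cons_erase hα).symm
    rw [hg]
    calc c * (M.map fun γ => max s₀ ‖γ - α‖).prod
        = c * (s₀ * ((M.erase α).map fun γ => max s₀ ‖γ - α‖).prod) := by
          conv_lhs => rw [hMeq]
          simp [Multiset.map_cons, Multiset.prod_cons, max_eq_left hs₀.le]
      _ ≤ c * (s₀ * ((M.erase α).map fun γ => max 1 ‖γ - α‖).prod) := by
          have := mprod_le_mprod (M := M.erase α)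
            (f := fun γ => max s₀ ‖γ - α‖) (g := fun γ => max 1 ‖γ - α‖)
            (fun x _ => le_max_of_le_left hs₀.le)
            (fun x _ => max_le_max hs₀le1 le_rfl)
          exact mul_le_mul_of_nonneg_left
            (mul_le_mul_of_nonneg_left this hs₀.le) hc.le
      _ = s₀ * (K - 1) := by rw [hK]; ring
      _ ≤ s₀ * K := by nlinarith
      _ ≤ (r / K) * K := by
          have : s₀ ≤ r / K := min_le_right _ _
          nlinarith
      _ = r := by field_simp
  set s₁ : ℝ := max 1 (r / c) with hs₁def
  have hs₁1 : 1 ≤ s₁ := le_max_left _ _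
  have hhigh : r ≤ g s₁ := by
    have hcard : 1 ≤ Multiset.card M := by
      rw [Nat.one_le_iff_ne_zero]
      intro h0
      rw [Multiset.card_eq_zero] at h0
      simp [h0] at hα
    have h1 : s₁ ^ Multiset.card M ≤ (M.map fun γ => max s₁ ‖γ - α‖).prod :=
      pow_le_mprod (by linarith) (fun x _ => le_max_left _ _)
    have h2 : s₁ ≤ s₁ ^ Multiset.card M := le_self_pow₀ (by linarith) (by omega)
    have h3 : r / c ≤ s₁ := le_max_right _ _
    have h4 : r ≤ c * s₁ := by
      rw [div_le_iff₀ hc] at h3; linarith [mul_comm s₁ c]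
    calc r ≤ c * s₁ := h4
      _ ≤ c * (M.map fun γ => max s₁ ‖γ - α‖).prod := by nlinarith
  have hs01 : s₀ ≤ s₁ := le_trans hs₀le1 hs₁1
  have := intermediate_value_Icc hs01 hgc.continuousOn
  obtain ⟨ρ, hρmem, hgρ⟩ := this ⟨hlow, hhigh⟩
  exact ⟨ρ, lt_of_lt_of_le hs₀ hρmem.1, hgρ⟩


end Helpers

open Classical in
lemma sum_card_filter {γ : Type*} {m : ℕ} (R : Multiset γ) (p : Fin m → γ → Prop)
    (h : ∀ z ∈ R, ∃! i, p i z) :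
    ∑ i, Multiset.card (R.filter fun z => p i z) = Multiset.card R := by
  classical
  induction R using Multiset.induction_on with
  | empty => simp
  | cons z R ih =>
    have hz := h z (Multiset.mem_cons_self _ _)
    obtain ⟨i₀, hi₀, huniq⟩ := hz
    have hstep : ∀ i, Multiset.card ((z ::ₘ R).filter fun x => p i x)
        = Multiset.card (R.filter fun x => p i x) + (if p i z then 1 else 0) := by
      intro i
      by_cases hpz : p i z
      · rw [Multiset.filter_cons_of_pos _ hpz, Multiset.card_cons, if_pos hpz]
      · rw [Multiset.filter_cons_of_neg _ hpz, if_neg hpz, Nat.add_zero]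
    simp only [hstep, Finset.sum_add_distrib, Multiset.card_cons]
    rw [ih (fun x hx => h x (Multiset.mem_cons_of_mem hx))]
    congr 1
    rw [Finset.sum_eq_single i₀ (fun b _ hb => if_neg (fun hpb => hb (huniq b hpb)))
      (fun hmem => absurd (Finset.mem_univ i₀) hmem)]
    exact if_pos hi₀

open Classical in
/-- Over a complete algebraically closed non-archimedean field, the preimage of a closed disk
under a polynomial `φ` of degree `d ≥ 1` is a disjoint union of `1 ≤ m ≤ d` closed disks,
and on the `i`-th disk `φ` takes every value of the target disk exactly `dᵢ` times
(with multiplicity), with `d₁ + ⋯ + d_m = d`. -/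
theorem stmt4 (Cv : Type*) [NormedField Cv] [CompleteSpace Cv] [IsAlgClosed Cv]
    [IsUltrametricDist Cv] (hnt : ∃ x : Cv, 1 < ‖x‖)
    (φ : Polynomial Cv) (d : ℕ) (hd : 1 ≤ d) (hdeg : φ.natDegree = d)
    (a : Cv) (r : ℝ) (hr : 0 < r) :
    ∃ (m : ℕ) (b : Fin m → Cv) (ρ : Fin m → ℝ) (e : Fin m → ℕ),
      1 ≤ m ∧ m ≤ d ∧ (∀ i, 0 < ρ i) ∧
      (∀ i j : Fin m, i ≠ j → Disjoint (closedBall (b i) (ρ i)) (closedBall (b j) (ρ j))) ∧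
      ((fun z => φ.eval z) ⁻¹' closedBall a r = ⋃ i, closedBall (b i) (ρ i)) ∧
      (∀ i, 1 ≤ e i ∧ e i ≤ d) ∧ (∑ i, e i = d) ∧
      ∀ w ∈ closedBall a r, ∀ i,
        Multiset.card ((φ - C w).roots.filter (fun z => z ∈ closedBall (b i) (ρ i))) = e i := by
  classical
  have hφne : φ ≠ 0 := fun h => by rw [h, natDegree_zero] at hdeg; omega
  set c : Cv := φ.leadingCoeff with hcdef
  have hc0 : c ≠ 0 := Polynomial.leadingCoeff_ne_zero.mpr hφne
  have hcn : (0:ℝ) < ‖c‖ := norm_pos_iff.mpr hc0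
  have hdegC : ∀ w : Cv, (φ - C w).natDegree = d := fun w => by
    rw [Polynomial.natDegree_sub_C, hdeg]
  have hne : ∀ w : Cv, φ - C w ≠ 0 := fun w h => by
    have h2 := hdegC w; rw [h, Polynomial.natDegree_zero] at h2; omega
  have hcardroots : ∀ w : Cv, Multiset.card (φ - C w).roots = d := fun w => by
    rw [← hdegC w]
    exact (Polynomial.splits_iff_card_roots.mp (IsAlgClosed.splits _))
  have hleadw : ∀ w : Cv, (φ - C w).leadingCoeff = c := fun w => by
    have hdpos : (0 : WithBot ℕ) < φ.degree :=
      Polynomial.natDegree_pos_iff_degree_pos.mp (by omega)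
    exact Polynomial.leadingCoeff_sub_of_degree_lt
      (lt_of_le_of_lt Polynomial.degree_C_le hdpos)
  have hfact : ∀ w : Cv,
      φ - C w = C c * ((φ - C w).roots.map fun γ => X - C γ).prod := fun w => by
    conv_lhs => rw [← Polynomial.C_leadingCoeff_mul_prod_multiset_X_sub_C
      ((hcardroots w).trans (hdegC w).symm)]
    rw [hleadw w]
  have heval : ∀ (w z : Cv),
      ‖φ.eval z - w‖ = ‖c‖ * ((φ - C w).roots.map fun γ => ‖z - γ‖).prod := by
    intro w z
    have h1 : φ.eval z - w = (φ - C w).eval z := by simp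
    rw [h1]
    conv_lhs => rw [hfact w]
    rw [Polynomial.eval_mul, Polynomial.eval_C, norm_mul]
    congr 1
    rw [Polynomial.eval_multiset_prod, Multiset.map_map, mprod_norm]
    congr 1
    apply Multiset.map_congr rfl
    intro x _
    simp
  set R : Multiset Cv := (φ - C a).roots with hR
  have hRcard : Multiset.card R = d := hcardroots a
  have hrhoex : ∀ α ∈ R, ∃ ρ0 : ℝ, 0 < ρ0 ∧
      ‖c‖ * (R.map fun γ => max ρ0 ‖γ - α‖).prod = r :=
    fun α hα => exists_rho R α hα hcn hr
  set ρfun : Cv → ℝ := fun α => if h : α ∈ R then (hrhoex α h).choose else 1 with hρfundef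
  have hρspec : ∀ α ∈ R, 0 < ρfun α ∧
      ‖c‖ * (R.map fun γ => max (ρfun α) ‖γ - α‖).prod = r := by
    intro α hα
    simp only [hρfundef, dif_pos hα]
    exact (hrhoex α hα).choose_spec
  have huniq : ∀ α ∈ R, ∀ s t : ℝ, 0 < s → 0 < t →
      ‖c‖ * (R.map fun γ => max s ‖γ - α‖).prod = r →
      ‖c‖ * (R.map fun γ => max t ‖γ - α‖).prod = r → s = t := by
    intro α hα s t hs ht h1 h2
    rcases lt_trichotomy s t with h | h | h
    · exfalso; have := gmono R α hα hs h; nlinarith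
    · exact h
    · exfalso; have := gmono R α hα ht h; nlinarith
  have hball_in : ∀ α ∈ R, ∀ z : Cv, ‖z - α‖ ≤ ρfun α → ‖φ.eval z - a‖ ≤ r := by
    intro α hα z hz
    rw [heval a z, ← hR, ← (hρspec α hα).2]
    apply mul_le_mul_of_nonneg_left _ hcn.le
    apply mprod_le_mprod (fun x _ => norm_nonneg _)
    intro γ _
    calc ‖z - γ‖ ≤ max ‖z - α‖ ‖α - γ‖ := ultra_three z α γ
      _ ≤ max (ρfun α) ‖γ - α‖ := by
          rw [norm_sub_rev α γ]; exact max_le_max hz le_rfl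
  have hcover : ∀ z : Cv, ‖φ.eval z - a‖ ≤ r → ∃ α ∈ R, ‖z - α‖ ≤ ρfun α := by
    intro z hzr
    have hRne : R.toFinset.Nonempty := by
      have hcc : Multiset.card R ≠ 0 := by rw [hRcard]; omega
      have hR0 : R ≠ 0 := by intro hh; rw [hh] at hcc; simp at hcc
      obtain ⟨x, hx⟩ := Multiset.exists_mem_of_ne_zero hR0
      exact ⟨x, Multiset.mem_toFinset.mpr hx⟩
    obtain ⟨α, hαT, hmin⟩ := R.toFinset.exists_min_image (fun γ => ‖z - γ‖) hRne
    have hαR : α ∈ R := Multiset.mem_toFinset.mp hαT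
    refine ⟨α, hαR, ?_⟩
    by_contra hcon
    push_neg at hcon
    have hzα0 : 0 < ‖z - α‖ := lt_trans (hρspec α hαR).1 hcon
    have hmono := gmono R α hαR (hρspec α hαR).1 hcon
    have hle : ‖c‖ * (R.map fun γ => max ‖z - α‖ ‖γ - α‖).prod ≤ ‖φ.eval z - a‖ := by
      rw [heval a z, ← hR]
      apply mul_le_mul_of_nonneg_left _ hcn.le
      apply mprod_le_mprod (fun x _ => le_trans (norm_nonneg _) (le_max_left _ _))
      intro γ hγ
      have h1 : ‖z - α‖ ≤ ‖z - γ‖ := hmin γ (Multiset.mem_toFinset.mpr hγ)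
      have h2 : ‖γ - α‖ ≤ ‖z - γ‖ := by
        calc ‖γ - α‖ ≤ max ‖γ - z‖ ‖z - α‖ := ultra_three γ z α
          _ ≤ ‖z - γ‖ := max_le (le_of_eq (norm_sub_rev _ _)) h1
      exact max_le h1 h2
    have h3 := (hρspec α hαR).2
    nlinarith
  have hballeq : ∀ (α β : Cv) (ρ0 : ℝ), ‖α - β‖ ≤ ρ0 →
      closedBall α ρ0 = closedBall β ρ0 := by
    intro α β ρ0 h
    ext z
    simp only [mem_closedBall, dist_eq_norm]
    constructor <;> intro hz
    · calc ‖z - β‖ ≤ max ‖z - α‖ ‖α - β‖ := ultra_three z α β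
        _ ≤ ρ0 := max_le hz h
    · calc ‖z - α‖ ≤ max ‖z - β‖ ‖β - α‖ := ultra_three z β α
        _ ≤ ρ0 := max_le hz (le_of_eq_of_le (norm_sub_rev β α) h)
  have hmergehalf : ∀ α ∈ R, ∀ β ∈ R, 0 < ρfun β → ‖α - β‖ ≤ ρfun β → ρfun α = ρfun β := by
    intro α hα β hβ hρβ hd2
    apply huniq α hα _ _ (hρspec α hα).1 hρβ (hρspec α hα).2
    rw [← (hρspec β hβ).2]
    congr 2
    apply Multiset.map_congr rfl
    intro γ _
    apply le_antisymm
    · apply max_le (le_max_left _ _)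
      calc ‖γ - α‖ ≤ max ‖γ - β‖ ‖β - α‖ := ultra_three γ β α
        _ ≤ max (ρfun β) ‖γ - β‖ := by
            apply max_le (le_max_right _ _)
            exact le_trans (le_of_eq (norm_sub_rev β α)) (le_trans hd2 (le_max_left _ _))
    · apply max_le (le_max_left _ _)
      calc ‖γ - β‖ ≤ max ‖γ - α‖ ‖α - β‖ := ultra_three γ α β
        _ ≤ max (ρfun β) ‖γ - α‖ := by
            apply max_le (le_max_right _ _)
            exact le_trans hd2 (le_max_left _ _)
  -- if two balls (centered at roots) intersect, they are equal
  have hmerge : ∀ α ∈ R, ∀ β ∈ R, ∀ z : Cv, ‖z - α‖ ≤ ρfun α → ‖z - β‖ ≤ ρfun β →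
      closedBall α (ρfun α) = closedBall β (ρfun β) := by
    intro α hα β hβ z hzα hzβ
    have hab : ‖α - β‖ ≤ max (ρfun α) (ρfun β) := by
      calc ‖α - β‖ ≤ max ‖α - z‖ ‖z - β‖ := ultra_three α z β
        _ ≤ max (ρfun α) (ρfun β) :=
            max_le_max (le_of_eq_of_le (norm_sub_rev α z) hzα) hzβ
    rcases le_total (ρfun α) (ρfun β) with h | h
    · have heqρ : ρfun α = ρfun β :=
        hmergehalf α hα β hβ (hρspec β hβ).1 (by rwa [max_eq_right h] at hab)
      rw [heqρ]
      apply hballeq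
      rwa [max_eq_right h] at hab
    · have heqρ : ρfun β = ρfun α := by
        apply hmergehalf β hβ α hα (hρspec α hα).1
        rw [max_eq_left h] at hab
        rwa [norm_sub_rev]
      rw [heqρ]
      symm
      apply hballeq
      rw [norm_sub_rev]
      rwa [max_eq_left h] at hab
  set rep : Set Cv → Cv :=
    fun s => if h : ∃ β, β ∈ R ∧ closedBall β (ρfun β) = s then h.choose else a with hrepdef
  set repc : Cv → Cv := fun α => rep (closedBall α (ρfun α)) with hrepcdef
  have hrepc : ∀ α ∈ R, repc α ∈ R ∧
      closedBall (repc α) (ρfun (repc α)) = closedBall α (ρfun α) := by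
    intro α hα
    have hex : ∃ β, β ∈ R ∧ closedBall β (ρfun β) = closedBall α (ρfun α) := ⟨α, hα, rfl⟩
    simp only [hrepcdef, hrepdef, dif_pos hex]
    exact hex.choose_spec
  have hrepc_ball : ∀ α β : Cv, closedBall α (ρfun α) = closedBall β (ρfun β) →
      repc α = repc β := by
    intro α β h
    simp only [hrepcdef, h]
  set U : Finset Cv := R.toFinset.image repc with hU
  have hUR : ∀ u ∈ U, u ∈ R ∧ repc u = u := by
    intro u hu
    obtain ⟨α, hαT, hαu⟩ := Finset.mem_image.mp hu
    have hαR : α ∈ R := Multiset.mem_toFinset.mp hαT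
    obtain ⟨h1, h2⟩ := hrepc α hαR
    constructor
    · rw [← hαu]; exact h1
    · rw [← hαu]
      exact hrepc_ball (repc α) α h2
  have hUne : U.Nonempty := by
    have hcc : Multiset.card R ≠ 0 := by rw [hRcard]; omega
    have hR0 : R ≠ 0 := by intro hh; rw [hh] at hcc; simp at hcc
    obtain ⟨x, hx⟩ := Multiset.exists_mem_of_ne_zero hR0
    exact ⟨repc x, Finset.mem_image.mpr ⟨x, Multiset.mem_toFinset.mpr hx, rfl⟩⟩
  set eqv : ↥U ≃ Fin U.card := Fintype.equivFinOfCardEq (Fintype.card_coe U) with heqv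
  set b : Fin U.card → Cv := fun i => ((eqv.symm i : ↥U) : Cv) with hb
  have hbmem : ∀ i, b i ∈ U := fun i => (eqv.symm i).2
  have hbinj : Function.Injective b := fun i j h =>
    eqv.symm.injective (Subtype.coe_injective h)
  have hbsurj : ∀ u ∈ U, ∃ i, b i = u := fun u hu =>
    ⟨eqv ⟨u, hu⟩, by simp [hb]⟩
  have hbR : ∀ i, b i ∈ R := fun i => (hUR _ (hbmem i)).1
  have hρpos : ∀ i, 0 < ρfun (b i) := fun i => (hρspec _ (hbR i)).1
  -- disjointness
  have hdisj : ∀ i j, i ≠ j →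
      Disjoint (closedBall (b i) (ρfun (b i))) (closedBall (b j) (ρfun (b j))) := by
    intro i j hij
    rw [Set.disjoint_left]
    intro z hzi hzj
    simp only [mem_closedBall, dist_eq_norm] at hzi hzj
    have hballs := hmerge (b i) (hbR i) (b j) (hbR j) z hzi hzj
    have h1 := hrepc_ball (b i) (b j) hballs
    rw [(hUR _ (hbmem i)).2, (hUR _ (hbmem j)).2] at h1
    exact hij (hbinj h1)
  -- preimage
  have hpre : (fun z => φ.eval z) ⁻¹' closedBall a r
      = ⋃ i, closedBall (b i) (ρfun (b i)) := by
    ext z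
    simp only [Set.mem_preimage, mem_closedBall, dist_eq_norm, Set.mem_iUnion]
    constructor
    · intro hz
      obtain ⟨α, hαR, hzα⟩ := hcover z hz
      have h2 := (hrepc α hαR).2
      have hzr : z ∈ closedBall (repc α) (ρfun (repc α)) := by
        rw [h2]
        exact mem_closedBall.mpr (by rw [dist_eq_norm]; exact hzα)
      obtain ⟨i, hi⟩ := hbsurj (repc α)
        (Finset.mem_image.mpr ⟨α, Multiset.mem_toFinset.mpr hαR, rfl⟩)
      refine ⟨i, ?_⟩
      rw [hi]
      rwa [mem_closedBall, dist_eq_norm] at hzr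
    · rintro ⟨i, hzi⟩
      exact hball_in (b i) (hbR i) z hzi
  -- unique covering index for roots
  have hcov_root : ∀ z ∈ R, ∃! i, z ∈ closedBall (b i) (ρfun (b i)) := by
    intro z hz
    obtain ⟨i, hi⟩ := hbsurj (repc z)
      (Finset.mem_image.mpr ⟨z, Multiset.mem_toFinset.mpr hz, rfl⟩)
    have hzball : z ∈ closedBall (b i) (ρfun (b i)) := by
      rw [hi, (hrepc z hz).2]
      exact mem_closedBall_self (hρspec z hz).1.le
    refine ⟨i, hzball, fun j hj => ?_⟩
    by_contra hne
    exact Set.disjoint_left.mp (hdisj j i hne) hj hzball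
  -- the count function
  set e : Fin U.card → ℕ :=
    fun i => Multiset.card (R.filter fun z => z ∈ closedBall (b i) (ρfun (b i))) with he
  have hsum : ∑ i, e i = d := by
    rw [← hRcard]
    exact sum_card_filter R _ hcov_root
  have hei : ∀ i, 1 ≤ e i ∧ e i ≤ d := by
    intro i
    constructor
    · have hmem : b i ∈ R.filter fun z => z ∈ closedBall (b i) (ρfun (b i)) :=
        Multiset.mem_filter.mpr ⟨hbR i, mem_closedBall_self (hρpos i).le⟩
      have hne0 : (R.filter fun z => z ∈ closedBall (b i) (ρfun (b i))) ≠ 0 := by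
        intro hh; rw [hh] at hmem; simp at hmem
      have h2 := Multiset.card_pos.mpr hne0
      simp only [he]
      omega
    · rw [← hRcard, he]
      exact Multiset.card_le_card (Multiset.filter_le _ _)
  -- the main count
  have hcount : ∀ w : Cv, ‖a - w‖ ≤ r → ∀ i,
      Multiset.card ((φ - C w).roots.filter fun z => z ∈ closedBall (b i) (ρfun (b i)))
        = e i := by
    intro w hw i
    have hαR : b i ∈ R := hbR i
    set α : Cv := b i with hαdef
    set ρ0 : ℝ := ρfun α with hρ0def
    have hρ0 : 0 < ρ0 := hρpos i
    set Ma : Multiset Cv := R.map (fun γ => γ - α) with hMa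
    set Mw : Multiset Cv := (φ - C w).roots.map (fun γ => γ - α) with hMw
    have hcomp : ∀ w' : Cv, (φ - C w').comp (X + C α)
        = C c * (((φ - C w').roots.map fun γ => γ - α).map fun β => X - C β).prod := by
      intro w'
      conv_lhs => rw [hfact w']
      rw [Polynomial.mul_comp, Polynomial.C_comp, Polynomial.multiset_prod_comp]
      congr 1
      rw [Multiset.map_map, Multiset.map_map]
      congr 1
      apply Multiset.map_congr rfl
      intro γ _
      simp only [Function.comp_apply, Polynomial.sub_comp, Polynomial.X_comp,
        Polynomial.C_comp]
      rw [map_sub]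
      ring
    have hdiff : φ - C w = (φ - C a) + C (a - w) := by
      rw [map_sub]; ring
    have heq2 : C c * (Mw.map fun β => X - C β).prod
        = C c * (Ma.map fun β => X - C β).prod + C (a - w) := by
      rw [hMw, hMa, hR, ← hcomp w, ← hcomp a]
      rw [hdiff, Polynomial.add_comp, Polynomial.C_comp]
    set u : Cv := (a - w) / c with hu2
    have hCu : (Polynomial.C (a - w) : Polynomial Cv) = C c * C u := by
      rw [← map_mul]
      congr 1
      rw [hu2]
      field_simp
    have heq3 : (Mw.map fun β => X - C β).prod
        = (Ma.map fun β => X - C β).prod + C u := by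
      apply mul_left_cancel₀ (show (C c : Polynomial Cv) ≠ 0 by
        simpa using hc0)
      rw [heq2, hCu]
      ring
    have hGa : (Ma.map fun β => max ρ0 ‖β‖).prod = r / ‖c‖ := by
      rw [hMa, Multiset.map_map]
      have h2 := (hρspec α hαR).2
      rw [eq_div_iff (ne_of_gt hcn)]
      rw [show ((fun β => max ρ0 ‖β‖) ∘ fun γ => γ - α) = fun γ => max ρ0 ‖γ - α‖ from rfl]
      linarith
    have hn1 : 1 ≤ Multiset.card (Ma.filter fun β => ‖β‖ ≤ ρ0) := by
      have h0 : (0:Cv) ∈ Ma := by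
        rw [hMa]; exact Multiset.mem_map.mpr ⟨α, hαR, sub_self α⟩
      have hmem : (0:Cv) ∈ Ma.filter (fun β => ‖β‖ ≤ ρ0) :=
        Multiset.mem_filter.mpr ⟨h0, by simp [hρ0.le]⟩
      have hne0 : (Ma.filter fun β => ‖β‖ ≤ ρ0) ≠ 0 := by
        intro hh; rw [hh] at hmem; simp at hmem
      have := Multiset.card_pos.mpr hne0
      omega
    have hunorm : ‖u‖ ≤ r / ‖c‖ := by
      rw [hu2, norm_div]
      exact (div_le_div_iff_of_pos_right hcn).mpr hw
    have hkey := count_eq Ma Mw hρ0 hGa hn1 hunorm heq3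
    have htrans : ∀ S : Multiset Cv,
        Multiset.card ((S.map fun γ => γ - α).filter fun β => ‖β‖ ≤ ρ0)
        = Multiset.card (S.filter fun z => z ∈ closedBall α ρ0) := by
      intro S
      rw [Multiset.filter_map, Multiset.card_map]
      congr 1
      apply Multiset.filter_congr
      intro x _
      simp [Function.comp, mem_closedBall, dist_eq_norm]
    calc Multiset.card ((φ - C w).roots.filter fun z => z ∈ closedBall α ρ0)
        = Multiset.card (Mw.filter fun β => ‖β‖ ≤ ρ0) := by rw [hMw, htrans]
      _ = Multiset.card (Ma.filter fun β => ‖β‖ ≤ ρ0) := hkey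
      _ = Multiset.card (R.filter fun z => z ∈ closedBall α ρ0) := by rw [hMa, htrans]
  -- assemble
  refine ⟨U.card, b, fun i => ρfun (b i), e, ?_, ?_, hρpos, hdisj, hpre, hei, hsum, ?_⟩
  · exact Finset.card_pos.mpr hUne
  · calc U.card ≤ R.toFinset.card := Finset.card_image_le
      _ ≤ Multiset.card R := Multiset.toFinset_card_le R
      _ = d := hRcard
  · intro w hw i
    apply hcount w
    rw [mem_closedBall, dist_eq_norm] at hw
    rwa [norm_sub_rev]
end

section
/- Let $f(z) \in \mathbb{C}_v[z]$ be monic of degree $d \geq 3$ over a complete algebraically closed non-archimedean field with residue characteristic $0$ or greater than $d$, with $0$ a fixed point of $f$ of local multiplicity at least $2$ (i.e., $f(z) = z^e \cdot g(z)$ with $e \geq 2$, $g(0) \neq 0$). Suppose $f$ has bad reduction with splitting radius $g_v > 0$, and for $i \geq 1$ let $r_i$ denote the logarithmic radius of the disk component of $f^{-i}(\{z : \log|z|_v \leq g_v\})$ containing $0$. Then the sequence of annulus moduli $r_i - r_{i+1}$ satisfies $g_v/(d-1)^i \leq r_i - r_{i+1} \leq (d-1)g_v/2^{i+1}$ for all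 $i \geq 1$. -/
open Polynomial Filter

section Aux

variable {Cv : Type*} [NormedField Cv]

lemma msProdNonneg (s : Multiset ℝ) (h : ∀ x ∈ s, 0 ≤ x) : 0 ≤ s.prod := by
  induction s using Multiset.induction_on with
  | empty => simp
  | cons a s ih =>
    rw [Multiset.prod_cons]
    exact mul_nonneg (h a (Multiset.mem_cons_self a s))
      (ih fun x hx => h x (Multiset.mem_cons_of_mem hx))

lemma msProdLe {A : Type*} (s : Multiset A) (f g : A → ℝ) (h0 : ∀ a ∈ s, 0 ≤ f a)
    (h : ∀ a ∈ s, f a ≤ g a) : (s.map f).prod ≤ (s.map g).prod := by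
  induction s using Multiset.induction_on with
  | empty => simp
  | cons a s ih =>
    simp only [Multiset.map_cons, Multiset.prod_cons]
    have hf := h0 a (Multiset.mem_cons_self a s)
    have hg := hf.trans (h a (Multiset.mem_cons_self a s))
    refine mul_le_mul (h a (Multiset.mem_cons_self a s))
      (ih (fun x hx => h0 x (Multiset.mem_cons_of_mem hx))
        (fun x hx => h x (Multiset.mem_cons_of_mem hx))) ?_ hg
    exact msProdNonneg _ (by
      intro x hx
      obtain ⟨b, hb, rfl⟩ := Multiset.mem_map.mp hx
      exact h0 b (Multiset.mem_cons_of_mem hb))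

lemma msNormProd (s : Multiset Cv) : ‖s.prod‖ = (s.map fun x => ‖x‖).prod := by
  induction s using Multiset.induction_on with
  | empty => simp
  | cons a s ih => simp [norm_mul, ih]

lemma msProdMapMulConst {A : Type*} (s : Multiset A) (h : A → ℝ) (c : ℝ) :
    (s.map fun a => h a * c).prod = (s.map h).prod * c ^ (Multiset.card s) := by
  rw [Multiset.prod_map_mul]
  congr 1
  simp [Multiset.map_const', Multiset.prod_replicate]

lemma normSubLeMax [IsUltrametricDist Cv] (z a : Cv) : ‖z - a‖ ≤ max ‖z‖ ‖a‖ := by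
  rw [sub_eq_add_neg]
  simpa using IsUltrametricDist.norm_add_le_max z (-a)

lemma normSubEqMax [IsUltrametricDist Cv] (z a : Cv) (h : ‖a‖ ≠ ‖z‖) :
    ‖z - a‖ = max ‖z‖ ‖a‖ := by
  rcases lt_or_gt_of_ne h with h' | h'
  · rw [sub_eq_add_neg, IsUltrametricDist.norm_add_eq_max_of_norm_ne_norm (by simpa using h.symm)]
    simp
  · rw [← norm_neg, neg_sub, sub_eq_add_neg,
      IsUltrametricDist.norm_add_eq_max_of_norm_ne_norm (by simpa using h)]
    rw [max_comm]
    simp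

lemma exists_norm_rpow [IsAlgClosed Cv] (x : Cv) (hx : 1 < ‖x‖)
    (q : ℚ) : ∃ z : Cv, ‖z‖ = ‖x‖ ^ (q : ℝ) := by
  obtain ⟨z, hz⟩ := IsAlgClosed.exists_pow_nat_eq (x ^ (q.num : ℤ)) (n := q.den) q.pos
  refine ⟨z, ?_⟩
  have hzn : ‖z‖ ^ (q.den : ℕ) = ‖x‖ ^ (q.num : ℤ) := by
    rw [← norm_pow, hz, norm_zpow]
  have hrhs : (‖x‖ ^ (q : ℝ)) ^ (q.den : ℕ) = ‖x‖ ^ (q.num : ℤ) := by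
    have h0 : (0:ℝ) ≤ ‖x‖ := norm_nonneg x
    rw [← Real.rpow_natCast (‖x‖ ^ (q : ℝ)) q.den, ← Real.rpow_mul h0, ← Real.rpow_intCast ‖x‖]
    congr 1
    rw [Rat.cast_def]
    field_simp
  have := hzn.trans hrhs.symm
  exact (pow_left_inj₀ (norm_nonneg z) (Real.rpow_nonneg (norm_nonneg x) _)
    q.pos.ne').mp this

/-- Density of the value group avoiding a finite set. -/
lemma exists_norm_between [IsAlgClosed Cv] (x : Cv) (hx : 1 < ‖x‖) (E : Finset ℝ)
    {a b : ℝ} (ha : 0 < a) (hab : a < b) :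
    ∃ z : Cv, a < ‖z‖ ∧ ‖z‖ < b ∧ ‖z‖ ∉ E := by
  have hx0 : (0:ℝ) < ‖x‖ := lt_trans one_pos hx
  set ca := Real.logb ‖x‖ a
  set cb := Real.logb ‖x‖ b
  have hcab : ca < cb := Real.logb_lt_logb hx ha hab
  obtain ⟨q1, hq1, hq1'⟩ := exists_rat_btwn hcab
  obtain ⟨q2, hq2, hq2'⟩ := exists_rat_btwn hq1'
  have hq12 : q1 < q2 := by exact_mod_cast hq2
  have hinf : ((fun q : ℚ => ‖x‖ ^ (q : ℝ)) '' (Set.Ioo q1 q2)).Infinite := by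
    refine Set.Infinite.image ?_ (Set.Ioo_infinite hq12)
    intro u hu v hv huv
    have : (u : ℝ) = (v : ℝ) := by
      by_contra hne
      rcases lt_or_gt_of_ne hne with h | h
      · exact absurd huv (ne_of_lt ((Real.rpow_lt_rpow_left_iff hx).mpr h))
      · exact absurd huv.symm (ne_of_lt ((Real.rpow_lt_rpow_left_iff hx).mpr h))
    exact_mod_cast this
  obtain ⟨ρ, hρ⟩ := (hinf.diff E.finite_toSet).nonempty
  obtain ⟨⟨q, hq, rfl⟩, hρE⟩ := hρ
  obtain ⟨z, hzn⟩ := exists_norm_rpow x hx q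
  refine ⟨z, ?_, ?_, by rwa [hzn]⟩
  · rw [hzn, ← Real.rpow_logb hx0 (ne_of_gt hx) ha]
    exact (Real.rpow_lt_rpow_left_iff hx).mpr (lt_trans hq1 (by exact_mod_cast hq.1))
  · rw [hzn, ← Real.rpow_logb hx0 (ne_of_gt hx) (lt_trans ha hab)]
    exact (Real.rpow_lt_rpow_left_iff hx).mpr (lt_trans (by exact_mod_cast hq.2) hq2')

end Aux

set_option maxHeartbeats 1000000 in
/-- For a monic polynomial `f = z^e g(z)` of degree `d ≥ 3` with a superattracting fixed point
at `0` (`e ≥ 2`, `g(0) ≠ 0`) over a complete algebraically closed non-archimedean field of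
residue characteristic `0` or `> d`, with bad reduction and splitting radius `g_v > 0`
(the logarithmic radius of the smallest disk about `0` containing the filled Julia set),
the logarithmic radii `r i` of the disk components containing `0` of the iterated preimages
of the disk of logarithmic radius `g_v` satisfy
`g_v/(d-1)^i ≤ r i - r (i+1) ≤ (d-1) g_v / 2^(i+1)` for all `i ≥ 1`. -/
theorem stmt5 (Cv : Type*) [NormedField Cv] [CompleteSpace Cv] [IsAlgClosed Cv]
    [IsUltrametricDist Cv] (hnt : ∃ x : Cv, 1 < ‖x‖)
    (f g : Polynomial Cv) (d e : ℕ) (hd : 3 ≤ d) (he : 2 ≤ e)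
    (hf : f = X ^ e * g) (hg0 : g.eval 0 ≠ 0) (hmonic : f.Monic) (hdeg : f.natDegree = d)
    (hres : ∀ p : ℕ, p.Prime → p ≤ d → ‖(p : Cv)‖ = 1)
    (gv : ℝ) (hgv : 0 < gv)
    (hK : IsLeast {s : ℝ | ∀ z : Cv,
      (∃ M : ℝ, ∀ n : ℕ, ‖(fun w => f.eval w)^[n] z‖ ≤ M) → ‖z‖ ≤ Real.exp s} gv)
    (r : ℕ → ℝ)
    (hr : ∀ i : ℕ, IsGreatest {s : ℝ | ∀ z : Cv, ‖z‖ ≤ Real.exp s →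
      ‖(fun w => f.eval w)^[i] z‖ ≤ Real.exp gv} (r i)) :
    ∀ i : ℕ, 1 ≤ i →
      gv / ((d : ℝ) - 1) ^ i ≤ r i - r (i + 1) ∧
      r i - r (i + 1) ≤ ((d : ℝ) - 1) * gv / 2 ^ (i + 1) := by
  classical
  obtain ⟨x, hx⟩ := hnt
  have hf0 : f ≠ 0 := hmonic.ne_zero
  have hd1 : 1 ≤ d := le_trans (by norm_num) hd
  have he0 : e ≠ 0 := by omega
  have hdR : (3:ℝ) ≤ (d:ℝ) := by exact_mod_cast hd
  have heR : (2:ℝ) ≤ (e:ℝ) := by exact_mod_cast he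
  have hgne : g ≠ 0 := fun h => hg0 (by simp [h])
  have hed : e ≤ d := by
    rw [← hdeg, hf, natDegree_mul (pow_ne_zero e X_ne_zero) hgne, natDegree_pow, natDegree_X]
    omega
  have feval0 : f.eval 0 = 0 := by simp [hf, zero_pow he0]
  have hfix : ∀ n : ℕ, (fun w => f.eval w)^[n] (0:Cv) = 0 :=
    fun n => Function.iterate_fixed feval0 n
  have hsplits := IsAlgClosed.splits f
  have hfac : f = (f.roots.map fun a => X - C a).prod :=
    Splits.eq_prod_roots_of_monic hsplits hmonic
  set R := f.roots with hR
  have hcard : Multiset.card R = d := by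
    rw [hR, splits_iff_card_roots.mp hsplits, hdeg]
  have hev : ∀ z : Cv, f.eval z = (R.map fun a => z - a).prod := by
    intro z
    conv_lhs => rw [hfac]
    rw [eval_multiset_prod, Multiset.map_map]
    simp [Function.comp]
  have hnormev : ∀ z : Cv, ‖f.eval z‖ = (R.map fun a => ‖z - a‖).prod := by
    intro z
    rw [hev z, msNormProd, Multiset.map_map]
    simp [Function.comp]
  set F : ℝ → ℝ := fun ρ => (R.map fun a => max ρ ‖a‖).prod with hFdef
  have hFpos : ∀ ρ : ℝ, 0 < ρ → 0 < F ρ := by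
    intro ρ hρ
    refine Multiset.prod_pos ?_
    intro y hy
    obtain ⟨a, _, rfl⟩ := Multiset.mem_map.mp hy
    exact lt_max_of_lt_left hρ
  have hFband : ∀ (ρ : ℝ) (z : Cv), ‖z‖ ≤ ρ → ‖f.eval z‖ ≤ F ρ := by
    intro ρ z hz
    rw [hnormev z]
    refine msProdLe R _ _ (fun a _ => norm_nonneg _) ?_
    intro a _
    exact (normSubLeMax z a).trans (max_le_max hz le_rfl)
  have hatt : ∀ z : Cv, (∀ a ∈ R, ‖a‖ ≠ ‖z‖) → ‖f.eval z‖ = F ‖z‖ := by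
    intro z hz
    rw [hnormev z]
    exact congrArg Multiset.prod (Multiset.map_congr rfl fun a ha => normSubEqMax z a (hz a ha))
  have hroots_le : ∀ a ∈ R, ‖a‖ ≤ Real.exp gv := by
    intro a ha
    refine hK.1 a ⟨‖a‖, ?_⟩
    intro n
    cases n with
    | zero => simp
    | succ n =>
      have hstep : (fun w => f.eval w)^[n+1] a = (fun w => f.eval w)^[n] (f.eval a) :=
        Function.iterate_succ_apply _ n a
      rw [hR] at ha
      rw [hstep, isRoot_of_mem_roots ha, hfix n]
      simp
  have hexp1 : (1:ℝ) < Real.exp gv := by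
    rw [← Real.exp_zero]
    exact Real.exp_lt_exp.mpr hgv
  have hstar : ∃ a ∈ R, Real.exp gv ≤ ‖a‖ := by
    by_contra hcon
    push_neg at hcon
    have hbound : ∀ s : Multiset Cv, (∀ a ∈ s, ‖a‖ < Real.exp gv) →
        ∃ c : ℝ, 1 ≤ c ∧ c < Real.exp gv ∧ ∀ a ∈ s, ‖a‖ ≤ c := by
      intro s
      induction s using Multiset.induction_on with
      | empty =>
        intro _
        exact ⟨(1 + Real.exp gv)/2, by linarith, by linarith, by simp⟩
      | cons a s ih =>
        intro hs
        obtain ⟨c, hc1, hc2, hc3⟩ := ih fun b hb => hs b (Multiset.mem_cons_of_mem hb)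
        refine ⟨max c ‖a‖, le_max_of_le_left hc1,
          max_lt hc2 (hs a (Multiset.mem_cons_self a s)), ?_⟩
        intro b hb
        rcases Multiset.mem_cons.mp hb with rfl | hb
        · exact le_max_right _ _
        · exact (hc3 b hb).trans (le_max_left _ _)
    obtain ⟨c, hc1, hc2, hc3⟩ := hbound R hcon
    have hc0 : (0:ℝ) < c := lt_of_lt_of_le one_pos hc1
    have hbig : ∀ z : Cv, c < ‖z‖ → ‖f.eval z‖ = ‖z‖ ^ d := by
      intro z hz
      rw [hnormev z,
        Multiset.map_congr rfl (fun a ha => ?_), Multiset.map_const', Multiset.prod_replicate,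
        hcard]
      have hlt : ‖a‖ < ‖z‖ := lt_of_le_of_lt (hc3 a ha) hz
      rw [normSubEqMax z a hlt.ne, max_eq_left hlt.le]
    have hesc : ∀ z : Cv, c < ‖z‖ → ∀ n : ℕ, c < ‖(fun w => f.eval w)^[n] z‖ ∧
        ‖z‖ ^ (n+1) ≤ ‖(fun w => f.eval w)^[n] z‖ := by
      intro z hz n
      induction n with
      | zero => exact ⟨by simpa using hz, by simpa using le_rfl⟩
      | succ n ih =>
        obtain ⟨ih1, ih2⟩ := ih
        have hz1 : 1 ≤ ‖z‖ := le_trans hc1 hz.le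
        have hw1 : 1 ≤ ‖(fun w => f.eval w)^[n] z‖ := le_trans hc1 ih1.le
        have hsucc : (fun w => f.eval w)^[n+1] z = f.eval ((fun w => f.eval w)^[n] z) :=
          Function.iterate_succ_apply' _ n z
        have hfw : ‖f.eval ((fun w => f.eval w)^[n] z)‖ = ‖(fun w => f.eval w)^[n] z‖ ^ d :=
          hbig _ ih1
        constructor
        · rw [hsucc, hfw]
          exact lt_of_lt_of_le ih1 (le_self_pow₀ hw1 (by omega))
        · rw [hsucc, hfw]
          calc ‖z‖ ^ (n+2) = ‖z‖ ^ (n+1) * ‖z‖ := by ring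
          _ ≤ ‖(fun w => f.eval w)^[n] z‖ * ‖(fun w => f.eval w)^[n] z‖ :=
            mul_le_mul ih2 (le_trans (le_self_pow₀ hz1 (by omega)) ih2) (norm_nonneg z)
              (norm_nonneg _)
          _ = ‖(fun w => f.eval w)^[n] z‖ ^ 2 := (sq _).symm
          _ ≤ ‖(fun w => f.eval w)^[n] z‖ ^ d := pow_le_pow_right₀ hw1 (by omega)
    have hmem : Real.log c ∈ {s : ℝ | ∀ z : Cv,
        (∃ M : ℝ, ∀ n : ℕ, ‖(fun w => f.eval w)^[n] z‖ ≤ M) → ‖z‖ ≤ Real.exp s} := by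
      intro z hzM
      rw [Real.exp_log hc0]
      by_contra hzc
      push_neg at hzc
      obtain ⟨M, hM⟩ := hzM
      have h1 : 1 < ‖z‖ := lt_of_le_of_lt hc1 hzc
      obtain ⟨n, hn⟩ := pow_unbounded_of_one_lt M h1
      have h2 := (hesc z hzc n).2
      have h3 : M < ‖(fun w => f.eval w)^[n] z‖ :=
        lt_of_lt_of_le (lt_of_lt_of_le hn (pow_le_pow_right₀ h1.le (by omega))) h2
      exact absurd (hM n) (not_le.mpr h3)
    have h4 := hK.2 hmem
    have h5 : Real.exp gv ≤ c := by
      rw [← Real.exp_log hc0]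
      exact Real.exp_le_exp.mpr h4
    linarith
  obtain ⟨α0, hα0R, hα0⟩ := hstar
  -- zero root count
  have hrep : Multiset.replicate e (0:Cv) ≤ R := by
    rw [← Multiset.le_count_iff_replicate_le]
    have hmul : f.roots = (X ^ e : Cv[X]).roots + g.roots := by
      conv_lhs => rw [hf]
      exact roots_mul (hf ▸ hf0)
    have hXe : ((X ^ e : Cv[X])).roots = e • ({0} : Multiset Cv) := by
      rw [roots_pow, roots_X]
    rw [hR, hmul, hXe, Multiset.count_add, Multiset.count_nsmul]
    simp
  set R1 := R - Multiset.replicate e 0 with hR1def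
  have hsplit0 : R = Multiset.replicate e 0 + R1 := (add_tsub_cancel_of_le hrep).symm
  have hR1sub : ∀ a ∈ R1, a ∈ R := fun a ha =>
    Multiset.mem_of_le (Multiset.sub_le_self R (Multiset.replicate e 0)) ha
  have hcard0 : e + Multiset.card R1 = d := by
    rw [← hcard]
    conv_rhs => rw [hsplit0]
    rw [Multiset.card_add, Multiset.card_replicate]
  set P : ℝ → ℝ := fun ρ => (R1.map fun a => max ρ ‖a‖).prod with hPdef
  have hFsplit : ∀ ρ : ℝ, 0 ≤ ρ → F ρ = ρ ^ e * P ρ := by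
    intro ρ hρ
    simp only [hFdef, hPdef]
    conv_lhs => rw [hsplit0]
    rw [Multiset.map_add, Multiset.prod_add, Multiset.map_replicate, Multiset.prod_replicate,
      norm_zero, max_eq_left hρ]
  set Q : ℝ → ℝ := fun ρ => ((R.erase α0).map fun a => max ρ ‖a‖).prod with hQdef
  have hcardQ : Multiset.card (R.erase α0) = d - 1 := by
    rw [Multiset.card_erase_of_mem hα0R, hcard]
    rfl
  have hFQ : ∀ ρ : ℝ, F ρ = max ρ ‖α0‖ * Q ρ := by
    intro ρ
    simp only [hFdef, hQdef]
    conv_lhs => rw [← Multiset.cons_erase hα0R]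
    rw [Multiset.map_cons, Multiset.prod_cons]
  have hpt : ∀ c' : ℝ, 0 ≤ c' → ∀ a b : ℝ, 0 < a → a ≤ b → max b c' * a ≤ max a c' * b := by
    intro c' hc' a b ha hab
    rcases le_total c' a with h | h
    · rw [max_eq_left (h.trans hab), max_eq_left h]
      nlinarith
    · rw [max_eq_right h]
      rcases le_total c' b with h2 | h2
      · rw [max_eq_left h2]
        nlinarith
      · rw [max_eq_right h2]
        nlinarith
  have hSLd : ∀ a b : ℝ, 0 < a → a ≤ b → F b * a ^ d ≤ F a * b ^ d := by
    intro a b ha hab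
    simp only [hFdef]
    rw [← hcard, ← msProdMapMulConst, ← msProdMapMulConst]
    exact msProdLe R _ _ (fun α _ => mul_nonneg (le_max_of_le_left (ha.trans_le hab).le) ha.le)
      (fun α _ => hpt ‖α‖ (norm_nonneg α) a b ha hab)
  have hSLd1 : ∀ a b : ℝ, 0 < a → a ≤ b → b ≤ Real.exp gv →
      F b * a ^ (d-1) ≤ F a * b ^ (d-1) := by
    intro a b ha hab hb
    rw [hFQ a, hFQ b, max_eq_right (hb.trans hα0), max_eq_right ((hab.trans hb).trans hα0),
      mul_assoc, mul_assoc]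
    refine mul_le_mul_of_nonneg_left ?_ (norm_nonneg α0)
    simp only [hQdef]
    rw [← hcardQ, ← msProdMapMulConst, ← msProdMapMulConst]
    exact msProdLe _ _ _ (fun α _ => mul_nonneg (le_max_of_le_left (ha.trans_le hab).le) ha.le)
      (fun α _ => hpt ‖α‖ (norm_nonneg α) a b ha hab)
  have hSLe : ∀ a b : ℝ, 0 < a → a ≤ b → F a * b ^ e ≤ F b * a ^ e := by
    intro a b ha hab
    have hb : 0 < b := ha.trans_le hab
    rw [hFsplit a ha.le, hFsplit b hb.le]
    have hP : P a ≤ P b := msProdLe _ _ _ (fun α _ => le_max_of_le_left ha.le)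
      (fun α _ => max_le_max hab le_rfl)
    have hPa : 0 ≤ P a := by
      simp only [hPdef]
      refine msProdNonneg _ ?_
      intro y hy
      obtain ⟨α, _, rfl⟩ := Multiset.mem_map.mp hy
      exact le_max_of_le_left ha.le
    calc a^e * P a * b^e = (a^e * b^e) * P a := by ring
    _ ≤ (a^e * b^e) * P b := mul_le_mul_of_nonneg_left hP (by positivity)
    _ = b^e * P b * a^e := by ring
  have hFmono : ∀ a b : ℝ, 0 < a → a ≤ b → F a ≤ F b := fun a b ha hab =>
    msProdLe _ _ _ (fun α _ => le_max_of_le_left ha.le) (fun α _ => max_le_max hab le_rfl)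
  have hFstrict : ∀ a b : ℝ, 0 < a → a < b → F a < F b := by
    intro a b ha hab
    by_contra hcon
    push_neg at hcon
    have h1 := hSLe a b ha hab.le
    have h2 : a ^ e < b ^ e := pow_lt_pow_left₀ hab ha.le he0
    have hFb := hFpos b (ha.trans hab)
    have h3 := mul_le_mul_of_nonneg_right hcon (pow_nonneg ha.le e)
    have h4 := mul_lt_mul_of_pos_left h2 (hFpos a ha)
    linarith
  -- surjectivity onto disks
  have hsurj : ∀ ρ : ℝ, 0 < ρ → ∀ w : Cv, ‖w‖ < F ρ → ∃ z : Cv, ‖z‖ ≤ ρ ∧ f.eval z = w := by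
    intro ρ hρ w hw
    set p := f - C w with hpdef
    have hpm : p.Monic := by
      refine hmonic.sub_of_left ?_
      refine lt_of_le_of_lt degree_C_le ?_
      rw [degree_eq_natDegree hf0, hdeg]
      exact_mod_cast (by omega : 0 < d)
    have hp0 : p ≠ 0 := hpm.ne_zero
    have hpev : ∀ z : Cv, p.eval z = f.eval z - w := by
      intro z; simp [hpdef]
    by_cases hex : ∃ β ∈ p.roots, ‖β‖ ≤ ρ
    · obtain ⟨β, hβ, hβρ⟩ := hex
      refine ⟨β, hβρ, ?_⟩
      have h0 : f.eval β - w = 0 := by rw [← hpev β]; exact isRoot_of_mem_roots hβ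
      exact sub_eq_zero.mp h0
    · push_neg at hex
      exfalso
      have hFρ := hFpos ρ hρ
      set u := ‖w‖ / F ρ with hu
      have hu0 : 0 ≤ u := div_nonneg (norm_nonneg w) hFρ.le
      have hu1 : u < 1 := (div_lt_one hFρ).mpr hw
      set v := (u + 1)/2 with hv
      have hv0 : 0 < v := by rw [hv]; linarith
      have hv1 : v < 1 := by rw [hv]; linarith
      set θ := v ^ ((d:ℝ))⁻¹ with hθdef
      have hθ0 : 0 < θ := Real.rpow_pos_of_pos hv0 _
      have hθ1 : θ < 1 := Real.rpow_lt_one hv0.le hv1 (by positivity)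
      have hθd : θ ^ d = v := by
        rw [hθdef, ← Real.rpow_natCast (v ^ ((d:ℝ))⁻¹) d, ← Real.rpow_mul hv0.le,
          inv_mul_cancel₀ (show (d:ℝ) ≠ 0 by positivity), Real.rpow_one]
      set a := θ * ρ with hadef
      have ha0 : 0 < a := mul_pos hθ0 hρ
      have haρ : a < ρ := by rw [hadef]; exact mul_lt_of_lt_one_left hρ hθ1
      have hFa : ‖w‖ < F a := by
        have h1 := hSLd a ρ ha0 haρ.le
        have h2 : a ^ d = v * ρ ^ d := by rw [hadef, mul_pow, hθd]
        have hρd : (0:ℝ) < ρ ^ d := by positivity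
        have h3 : F ρ * v ≤ F a := by
          refine le_of_mul_le_mul_right ?_ hρd
          calc F ρ * v * ρ^d = F ρ * (v * ρ^d) := by ring
          _ = F ρ * a^d := by rw [← h2]
          _ ≤ F a * ρ^d := h1
        have h4 : ‖w‖ = u * F ρ := by rw [hu]; field_simp
        have h5 : u * F ρ < v * F ρ := by
          apply mul_lt_mul_of_pos_right _ hFρ
          rw [hv]; linarith
        calc ‖w‖ = u * F ρ := h4
        _ < v * F ρ := h5
        _ = F ρ * v := mul_comm _ _
        _ ≤ F a := h3
      obtain ⟨z0, hz1, hz2, hz3⟩ := exists_norm_between x hx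
        ((R.map fun α => ‖α‖).toFinset) ha0 haρ
      have hz0R : ∀ α ∈ R, ‖α‖ ≠ ‖z0‖ := by
        intro α hα hEq
        exact hz3 (Multiset.mem_toFinset.mpr (Multiset.mem_map.mpr ⟨α, hα, hEq⟩))
      have hfz0 : ‖f.eval z0‖ = F ‖z0‖ := hatt z0 hz0R
      have hz00 : 0 < ‖z0‖ := lt_trans ha0 hz1
      have hwlt : ‖w‖ < ‖f.eval z0‖ := by
        rw [hfz0]
        exact lt_of_lt_of_le hFa (hFmono a ‖z0‖ ha0 hz1.le)
      have hpfac : p = (p.roots.map fun a => X - C a).prod :=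
        Splits.eq_prod_roots_of_monic (IsAlgClosed.splits p) hpm
      have hpnorm : ∀ z : Cv, ‖p.eval z‖ = (p.roots.map fun β => ‖z - β‖).prod := by
        intro z
        conv_lhs => rw [hpfac]
        rw [eval_multiset_prod, Multiset.map_map, msNormProd, Multiset.map_map]
        refine congrArg Multiset.prod (Multiset.map_congr rfl fun β _ => ?_)
        simp [Function.comp]
      have hpev0 : (p.roots.map fun β => ‖β‖).prod = ‖w‖ := by
        have h1 : ‖p.eval 0‖ = ‖w‖ := by rw [hpev 0, feval0, zero_sub, norm_neg]
        rw [← h1, hpnorm 0]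
        refine congrArg Multiset.prod (Multiset.map_congr rfl fun β _ => ?_)
        rw [zero_sub, norm_neg]
      have hpz0 : ‖p.eval z0‖ ≤ ‖w‖ := by
        rw [hpnorm z0, ← hpev0]
        refine msProdLe _ _ _ (fun β _ => norm_nonneg _) ?_
        intro β hβ
        have hβz : ‖z0‖ < ‖β‖ := lt_trans hz2 (hex β hβ)
        rw [normSubEqMax z0 β hβz.ne', max_eq_right hβz.le]
      have hpz0' : ‖p.eval z0‖ = ‖f.eval z0‖ := by
        rw [hpev z0, normSubEqMax (f.eval z0) w (ne_of_lt hwlt), max_eq_left hwlt.le]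
      rw [hpz0'] at hpz0
      exact absurd hpz0 (not_le.mpr hwlt)
  -- the two characterizing properties of r
  have hrmem : ∀ i : ℕ, ∀ z : Cv, ‖z‖ ≤ Real.exp (r i) →
      ‖(fun w => f.eval w)^[i] z‖ ≤ Real.exp gv := fun i => (hr i).1
  have hrub : ∀ (i : ℕ) (s : ℝ), (∀ z : Cv, ‖z‖ ≤ Real.exp s →
      ‖(fun w => f.eval w)^[i] z‖ ≤ Real.exp gv) → s ≤ r i := fun i s hs => (hr i).2 hs
  have hr0 : r 0 = gv := by
    refine le_antisymm ?_ (hrub 0 gv ?_)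
    · by_contra hcon
      push_neg at hcon
      obtain ⟨z, hz1, hz2, _⟩ := exists_norm_between x hx ∅ (Real.exp_pos gv)
        (Real.exp_lt_exp.mpr hcon)
      have := hrmem 0 z hz2.le
      simp only [Function.iterate_zero, id] at this
      linarith
    · intro z hz
      simpa using hz
  -- the key recursion
  have hKR : ∀ i : ℕ, F (Real.exp (r (i+1))) = Real.exp (r i) := by
    intro i
    have hc0 : 0 < F (Real.exp (r (i+1))) := hFpos _ (Real.exp_pos _)
    refine le_antisymm ?_ ?_
    · by_contra hcon
      push_neg at hcon
      have hlc : r i < Real.log (F (Real.exp (r (i+1)))) :=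
        (Real.lt_log_iff_exp_lt hc0).mpr hcon
      set s := (r i + Real.log (F (Real.exp (r (i+1)))))/2 with hs
      have hs1 : r i < s := by rw [hs]; linarith
      have hs2 : s < Real.log (F (Real.exp (r (i+1)))) := by rw [hs]; linarith
      have hmem' : ∀ z : Cv, ‖z‖ ≤ Real.exp s →
          ‖(fun w => f.eval w)^[i] z‖ ≤ Real.exp gv := by
        intro w hw
        have hwc : ‖w‖ < F (Real.exp (r (i+1))) := by
          refine lt_of_le_of_lt hw ?_
          rw [← Real.exp_log hc0]
          exact Real.exp_lt_exp.mpr hs2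
        obtain ⟨z, hz1, hz2⟩ := hsurj (Real.exp (r (i+1))) (Real.exp_pos _) w hwc
        have h1 := hrmem (i+1) z hz1
        rw [Function.iterate_succ_apply] at h1
        rwa [hz2] at h1
      exact absurd (hrub i s hmem') (not_le.mpr hs1)
    · by_contra hcon
      push_neg at hcon
      have hlc : Real.log (F (Real.exp (r (i+1)))) < r i := by
        rw [← Real.log_exp (r i)]
        exact Real.log_lt_log hc0 hcon
      have hdpos : (0:ℝ) < (d:ℝ) := by linarith
      set s := r (i+1) + (r i - Real.log (F (Real.exp (r (i+1)))))/(2*d) with hs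
      have hs1 : r (i+1) < s := by
        rw [hs]
        have : 0 < (r i - Real.log (F (Real.exp (r (i+1)))))/(2*d) := by
          apply div_pos (by linarith) (by linarith)
        linarith
      have hkey : Real.exp (r i) ≤ F (Real.exp s) := by
        have hnotmem : ¬ (∀ z : Cv, ‖z‖ ≤ Real.exp s →
            ‖(fun w => f.eval w)^[i+1] z‖ ≤ Real.exp gv) := by
          intro hmem'
          exact absurd (hrub (i+1) s hmem') (not_le.mpr hs1)
        push_neg at hnotmem
        obtain ⟨z, hz1, hz2⟩ := hnotmem
        have h3 : Real.exp (r i) < ‖f.eval z‖ := by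
          by_contra h4
          push_neg at h4
          have h5 := hrmem i (f.eval z) h4
          rw [Function.iterate_succ_apply] at hz2
          exact absurd h5 (not_le.mpr hz2)
        exact le_trans h3.le (hFband (Real.exp s) z hz1)
      have h5 := hSLd (Real.exp (r (i+1))) (Real.exp s) (Real.exp_pos _)
        (Real.exp_le_exp.mpr hs1.le)
      have h6 : Real.exp (r i) * Real.exp (r (i+1)) ^ d ≤
          F (Real.exp (r (i+1))) * Real.exp s ^ d :=
        le_trans (mul_le_mul_of_nonneg_right hkey (by positivity)) h5
      rw [← Real.exp_nat_mul, ← Real.exp_nat_mul, ← Real.exp_add] at h6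
      rw [← Real.exp_log hc0, ← Real.exp_add] at h6
      have h7 := Real.exp_le_exp.mp h6
      rw [hs] at h7
      have h8 : (d:ℝ) * ((r i - Real.log (F (Real.exp (r (i+1)))))/(2*d)) =
          (r i - Real.log (F (Real.exp (r (i+1)))))/2 := by
        field_simp
      linarith [h7, h8, hlc]
  -- F 1 is at least exp gv
  have hF1 : Real.exp gv ≤ F 1 := by
    rw [hFQ 1]
    have hQ1 : 1 ≤ Q 1 := by
      have h := msProdLe (R.erase α0) (fun _ => (1:ℝ)) (fun a => max 1 ‖a‖)
        (fun _ _ => by norm_num) (fun a _ => le_max_left _ _)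
      simpa [Multiset.map_const', Multiset.prod_replicate] using h
    have h1 : Real.exp gv ≤ max 1 ‖α0‖ := le_max_of_le_right hα0
    calc Real.exp gv = Real.exp gv * 1 := (mul_one _).symm
    _ ≤ max 1 ‖α0‖ * Q 1 := mul_le_mul h1 hQ1 (by norm_num)
        (le_trans (Real.exp_pos gv).le h1)
  have hr1 : r 1 ≤ 0 := by
    by_contra hcon
    push_neg at hcon
    have h := hFstrict 1 (Real.exp (r 1)) one_pos
      (by rw [← Real.exp_zero]; exact Real.exp_lt_exp.mpr hcon)
    rw [hKR 0, hr0] at h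
    linarith
  have hmono : ∀ i : ℕ, r (i+1) ≤ r i := by
    intro i
    induction i with
    | zero => rw [hr0]; linarith
    | succ n ih =>
      by_contra hcon
      push_neg at hcon
      have h := hFstrict (Real.exp (r (n+1))) (Real.exp (r (n+2))) (Real.exp_pos _)
        (Real.exp_lt_exp.mpr hcon)
      rw [hKR n, hKR (n+1)] at h
      exact absurd (Real.exp_lt_exp.mp h) (not_lt.mpr ih)
  have hanti : Antitone r := antitone_nat_of_succ_le hmono
  have hrle : ∀ i : ℕ, r i ≤ gv := fun i => le_of_le_of_eq (hanti (Nat.zero_le i)) hr0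
  have hcast : ((d - 1 : ℕ) : ℝ) = (d:ℝ) - 1 := by
    rw [Nat.cast_sub hd1]
    simp
  have hstepL : ∀ i : ℕ, r i - r (i+1) ≤ ((d:ℝ) - 1) * (r (i+1) - r (i+2)) := by
    intro i
    have h := hSLd1 (Real.exp (r (i+2))) (Real.exp (r (i+1))) (Real.exp_pos _)
      (Real.exp_le_exp.mpr (hmono (i+1))) (Real.exp_le_exp.mpr (hrle (i+1)))
    rw [hKR (i+1), hKR i] at h
    rw [← Real.exp_nat_mul, ← Real.exp_nat_mul, ← Real.exp_add, ← Real.exp_add] at h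
    have h2 := Real.exp_le_exp.mp h
    rw [hcast] at h2
    nlinarith [h2]
  have hstepU : ∀ i : ℕ, r (i+1) - r (i+2) ≤ (r i - r (i+1)) / 2 := by
    intro i
    have h := hSLe (Real.exp (r (i+2))) (Real.exp (r (i+1))) (Real.exp_pos _)
      (Real.exp_le_exp.mpr (hmono (i+1)))
    rw [hKR (i+1), hKR i] at h
    rw [← Real.exp_nat_mul, ← Real.exp_nat_mul, ← Real.exp_add, ← Real.exp_add] at h
    have h2 := Real.exp_le_exp.mp h
    have hnn : 0 ≤ r (i+1) - r (i+2) := by linarith [hmono (i+1)]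
    nlinarith [h2, mul_le_mul_of_nonneg_right heR hnn]
  have hbaseL : gv ≤ r 0 - r 1 := by rw [hr0]; linarith
  have hbaseU : r 0 - r 1 ≤ ((d:ℝ) - 1) * gv / 2 := by
    set t1 := (3 - (d:ℝ)) * gv / 2 with ht1
    have ht1le : t1 ≤ 0 := by
      rw [ht1]
      apply div_nonpos_of_nonpos_of_nonneg _ (by norm_num)
      nlinarith
    have hFt1 : F (Real.exp t1) ≤ Real.exp gv := by
      have hρ := Real.exp_pos t1
      rw [hFsplit _ hρ.le]
      have hexpt1 : Real.exp t1 ≤ 1 := by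
        rw [← Real.exp_zero]
        exact Real.exp_le_exp.mpr ht1le
      have h2 : P (Real.exp t1) ≤ Real.exp gv ^ (Multiset.card R1) := by
        have h := msProdLe R1 (fun a => max (Real.exp t1) ‖a‖) (fun _ => Real.exp gv)
          (fun a _ => le_max_of_le_left hρ.le) ?_
        · simpa [Multiset.map_const', Multiset.prod_replicate] using h
        · intro a ha
          exact max_le (hexpt1.trans hexp1.le) (hroots_le a (hR1sub a ha))
      have hPnn : 0 ≤ P (Real.exp t1) := by
        simp only [hPdef]
        refine msProdNonneg _ ?_
        intro y hy
        obtain ⟨α, _, rfl⟩ := Multiset.mem_map.mp hy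
        exact le_max_of_le_left hρ.le
      have hcR1 : Multiset.card R1 = d - e := by omega
      calc Real.exp t1 ^ e * P (Real.exp t1)
          ≤ Real.exp t1 ^ e * Real.exp gv ^ (Multiset.card R1) :=
        mul_le_mul_of_nonneg_left h2 (by positivity)
      _ = Real.exp t1 ^ e * Real.exp gv ^ (d - e) := by rw [hcR1]
      _ ≤ Real.exp gv := by
          rw [← Real.exp_nat_mul, ← Real.exp_nat_mul, ← Real.exp_add]
          refine Real.exp_le_exp.mpr ?_
          have hcast2 : ((d - e : ℕ):ℝ) = (d:ℝ) - e := by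
            rw [Nat.cast_sub hed]
          rw [hcast2, ht1]
          have hkey : 0 ≤ gv * ((e:ℝ) - 2) * ((d:ℝ) - 1) := by
            apply mul_nonneg (mul_nonneg hgv.le (by linarith)) (by linarith)
          nlinarith [hkey]
    have ht1r1 : t1 ≤ r 1 := by
      by_contra hcon
      push_neg at hcon
      have h := hFstrict (Real.exp (r 1)) (Real.exp t1) (Real.exp_pos _)
        (Real.exp_lt_exp.mpr hcon)
      rw [hKR 0, hr0] at h
      linarith
    rw [hr0]
    rw [ht1] at ht1r1
    linarith
  have hdm1 : (0:ℝ) < (d:ℝ) - 1 := by linarith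
  have hind : ∀ i : ℕ, gv / ((d:ℝ)-1)^i ≤ r i - r (i+1) ∧
      r i - r (i+1) ≤ ((d:ℝ)-1) * gv / 2^(i+1) := by
    intro i
    induction i with
    | zero =>
      constructor
      · simpa using hbaseL
      · simpa using hbaseU
    | succ n ih =>
      obtain ⟨ih1, ih2⟩ := ih
      constructor
      · have h := hstepL n
        have h2 : gv / ((d:ℝ)-1)^n / ((d:ℝ)-1) ≤ r (n+1) - r (n+2) := by
          rw [div_le_iff₀ hdm1]
          calc gv / ((d:ℝ)-1)^n ≤ r n - r (n+1) := ih1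
          _ ≤ ((d:ℝ)-1) * (r (n+1) - r (n+2)) := h
          _ = (r (n+1) - r (n+2)) * ((d:ℝ)-1) := mul_comm _ _
        calc gv / ((d:ℝ)-1)^(n+1) = gv / ((d:ℝ)-1)^n / ((d:ℝ)-1) := by
              rw [div_div, ← pow_succ]
        _ ≤ r (n+1) - r (n+2) := h2
      · have h := hstepU n
        calc r (n+1) - r (n+2) ≤ (r n - r (n+1))/2 := h
        _ ≤ (((d:ℝ)-1) * gv / 2^(n+1))/2 := by linarith
        _ = ((d:ℝ)-1) * gv / 2^(n+2) := by rw [div_div, ← pow_succ]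
  exact fun i _ => hind i
end

section
/- Mason–Stothers theorem ($abc$ for polynomials): Let $k$ be a field of characteristic zero, and let $a, b, c \in k[t]$ be nonzero polynomials, not all constant, with $a + b + c = 0$ and $\gcd(a, b, c) = 1$. Then $\max\{\deg a, \deg b, \deg c\} \leq \deg \mathrm{rad}(abc) - 1$, where $\mathrm{rad}(abc)$ is the product of the distinct irreducible factors of $abc$. -/
open Polynomial UniqueFactorizationMonoid

/-- Mason–Stothers theorem (abc for polynomials): if `a, b, c` are nonzero polynomials over
a field of characteristic zero, not all constant, with `a + b + c = 0` and
`gcd(a,b,c) = 1`, then `max(deg a, deg b, deg c) ≤ deg rad(abc) - 1`. -/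
theorem stmt7 (k : Type*) [Field k] [CharZero k] [DecidableEq k]
    (a b c : Polynomial k) (ha : a ≠ 0) (hb : b ≠ 0) (hc : c ≠ 0)
    (hnc : ¬(a.natDegree = 0 ∧ b.natDegree = 0 ∧ c.natDegree = 0))
    (hsum : a + b + c = 0)
    (hgcd : ∀ p : Polynomial k, p ∣ a → p ∣ b → p ∣ c → IsUnit p) :
    max (max a.natDegree b.natDegree) c.natDegree ≤ (radical (a * b * c)).natDegree - 1 := by
  have hca' : c = -(a + b) := by linear_combination hsum
  have hab : IsCoprime a b := by
    rw [← EuclideanDomain.gcd_isUnit_iff]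
    exact hgcd _ (EuclideanDomain.gcd_dvd_left a b) (EuclideanDomain.gcd_dvd_right a b)
      (hca' ▸ (dvd_neg.mpr (dvd_add (EuclideanDomain.gcd_dvd_left a b)
        (EuclideanDomain.gcd_dvd_right a b))))
  have hbc : IsCoprime b c := by
    rw [← EuclideanDomain.gcd_isUnit_iff]
    have h1 := EuclideanDomain.gcd_dvd_left b c
    have h2 := EuclideanDomain.gcd_dvd_right b c
    have ha' : a = -(b + c) := by linear_combination hsum
    exact hgcd _ (ha' ▸ dvd_neg.mpr (dvd_add h1 h2)) h1 h2
  have hca : IsCoprime c a := by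
    rw [← EuclideanDomain.gcd_isUnit_iff]
    have h1 := EuclideanDomain.gcd_dvd_left c a
    have h2 := EuclideanDomain.gcd_dvd_right c a
    have hb' : b = -(c + a) := by linear_combination hsum
    exact hgcd _ h2 (hb' ▸ dvd_neg.mpr (dvd_add h1 h2)) h1
  rcases Polynomial.abc ha hb hc hab hsum with ⟨h1, h2, h3⟩ | ⟨d1, d2, d3⟩
  · omega
  · exact absurd ⟨natDegree_eq_zero_of_derivative_eq_zero d1,
      natDegree_eq_zero_of_derivative_eq_zero d2,
      natDegree_eq_zero_of_derivative_eq_zero d3⟩ hnc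
end

section
/- Let $\mathbb{C}_v$ be a complete algebraically closed non-archimedean field, and let $f \in \mathbb{C}_v[z]$ be monic of degree $d \geq 2$ with bad reduction and splitting radius $g_v > 0$; suppose the residue characteristic is $0$ or greater than $d$ and suppose additionally $f(z)$ has constant term of valuation $\geq 0$ and lowest-degree term of degree $\geq 2$ (so $0 \in \mathcal{K}_v$). Then every disk component $\mathcal{B}$ of $f^{-1}(\{z : \log|z|_v \leq g_v\})$ has radius at most $1$, i.e., $|z - z'|_v \leq 1$ for all $z, z'$ in the same disk component. -/
open Polynomial

lemma norm_multiset_prod' {K : Type*} [NormedField K] (s : Multiset K) :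
    ‖s.prod‖ = (s.map fun x => ‖x‖).prod := by
  induction s using Multiset.induction with
  | empty => simp
  | cons a s ih => simp [norm_mul, ih]

lemma us_norm_sub_eq {K : Type*} [NormedField K] [IsUltrametricDist K]
    {x y : K} (h : ‖y‖ < ‖x‖) : ‖x - y‖ = ‖x‖ := by
  rw [sub_eq_add_neg, IsUltrametricDist.norm_add_eq_max_of_norm_ne_norm
    (by simpa using h.ne')]
  simpa using h.le

lemma nat_norm_one {K : Type*} [NormedField K] {d : ℕ}
    (hres : ∀ p : ℕ, p.Prime → p ≤ d → ‖(p : K)‖ = 1) :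
    ∀ m : ℕ, 1 ≤ m → m ≤ d → ‖(m : K)‖ = 1 := by
  intro m
  induction m using Nat.strong_induction_on with
  | _ m ih =>
    intro h1 hle
    rcases eq_or_lt_of_le h1 with h | h
    · simp [← h]
    · obtain ⟨p, hp, k, rfl⟩ : ∃ p, Nat.Prime p ∧ ∃ k, m = p * k := by
        obtain ⟨p, hp, hdvd⟩ := Nat.exists_prime_and_dvd (by omega : m ≠ 1)
        obtain ⟨k, rfl⟩ := hdvd
        exact ⟨p, hp, k, rfl⟩
      have hp2 := hp.two_le
      have hk1 : 1 ≤ k := by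
        rcases Nat.eq_zero_or_pos k with h0 | h0
        · subst h0; simp at h1
        · omega
      have hklt : k < p * k := by nlinarith
      push_cast
      rw [norm_mul, hres p hp (by nlinarith), ih k hklt hk1 (by nlinarith), one_mul]

lemma multiset_prod_ge {s : Multiset ℝ} (h1 : ∀ x ∈ s, (1:ℝ) ≤ x) {a b : ℝ}
    (hab : ({a, b} : Multiset ℝ) ≤ s) : a * b ≤ s.prod := by
  obtain ⟨u, rfl⟩ := Multiset.le_iff_exists_add.mp hab
  rw [Multiset.prod_add]
  have hprodab : ({a, b} : Multiset ℝ).prod = a * b := by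
    simp [Multiset.insert_eq_cons]
  rw [hprodab]
  have ha1 : (1:ℝ) ≤ a := h1 a (by simp)
  have hb1 : (1:ℝ) ≤ b := h1 b (by simp)
  have hu : (1:ℝ) ≤ u.prod := by
    clear hab hprodab
    induction u using Multiset.induction with
    | empty => simp
    | cons c u ih =>
      rw [Multiset.prod_cons]
      have hc : (1:ℝ) ≤ c := h1 c (by simp)
      have hrest : (1:ℝ) ≤ u.prod := by
        apply ih
        intro x hx
        apply h1
        rcases Multiset.mem_add.mp hx with h | h
        · exact Multiset.mem_add.mpr (Or.inl h)
        · exact Multiset.mem_add.mpr (Or.inr (Multiset.mem_cons_of_mem h))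
      nlinarith
  have h0ab : (0:ℝ) ≤ a * b := by nlinarith
  nlinarith

/-- For a monic polynomial `f` of degree `d ≥ 2` over a complete algebraically closed
non-archimedean field of residue characteristic `0` or `> d`, with bad reduction and
splitting radius `g_v > 0` (the logarithmic radius of the smallest disk about `0` containing
the filled Julia set), and with lowest-degree term of degree at least `2` (so `0` lies in
the filled Julia set), every disk component of `f⁻¹({z : log|z| ≤ g_v})` has radius at most
`1`: two points of the preimage lying in a common disk inside the preimage are at distance
at most `1`. -/
theorem stmt17 (Cv : Type*) [NormedField Cv] [CompleteSpace Cv] [IsAlgClosed Cv]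
    [IsUltrametricDist Cv] (hnt : ∃ x : Cv, 1 < ‖x‖)
    (f : Polynomial Cv) (d : ℕ) (hd : 2 ≤ d) (hmonic : f.Monic) (hdeg : f.natDegree = d)
    (hres : ∀ p : ℕ, p.Prime → p ≤ d → ‖(p : Cv)‖ = 1)
    (h0 : f.coeff 0 = 0) (h1 : f.coeff 1 = 0)
    (gv : ℝ) (hgv : 0 < gv)
    (hK : IsLeast {s : ℝ | ∀ z : Cv,
      (∃ M : ℝ, ∀ n : ℕ, ‖(fun w => f.eval w)^[n] z‖ ≤ M) → ‖z‖ ≤ Real.exp s} gv) :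
    ∀ z z' : Cv, ‖f.eval z‖ ≤ Real.exp gv →
      (∀ w : Cv, ‖w - z‖ ≤ ‖z' - z‖ → ‖f.eval w‖ ≤ Real.exp gv) →
      ‖z - z'‖ ≤ 1 := by
  classical
  intro z z' hfz hdisk
  by_contra hcon
  push_neg at hcon
  rw [norm_sub_rev] at hcon
  set E := Real.exp gv with hEdef
  have hE1 : 1 < E := by
    have := Real.exp_lt_exp.mpr hgv
    rwa [Real.exp_zero] at this
  set r := ‖z' - z‖ with hrdef
  -- basic polynomial facts
  have hfne : f ≠ 0 := hmonic.ne_zero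
  have hsplits : Splits f := IsAlgClosed.splits f
  have hfactor := hsplits.eq_prod_roots_of_monic hmonic
  have hcard : Multiset.card f.roots = d := by
    rw [splits_iff_card_roots.mp hsplits, hdeg]
  have hevalnorm : ∀ x : Cv, ‖f.eval x‖ = (f.roots.map fun a => ‖x - a‖).prod := by
    intro x
    conv_lhs => rw [hfactor]
    rw [eval_multiset_prod, norm_multiset_prod', Multiset.map_map, Multiset.map_map]
    simp [Function.comp_def]
  have h0eval : f.eval 0 = 0 := by rw [← coeff_zero_eq_eval_zero]; exact h0
  -- every root is in the filled Julia set, hence bounded by E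
  have hrootK : ∀ a ∈ f.roots, ‖a‖ ≤ E := by
    intro a ha
    have haroot : f.eval a = 0 := (mem_roots hfne).mp ha
    apply hK.1
    refine ⟨‖a‖, fun n => ?_⟩
    match n with
    | 0 => simp
    | (n+1) =>
      have hz : (fun w => f.eval w)^[n+1] a = 0 := by
        induction n with
        | zero => simpa using haroot
        | succ k ihk => rw [Function.iterate_succ_apply', ihk]; simpa using h0eval
      rw [hz]
      simpa using norm_nonneg a
  -- 0 is a root of multiplicity at least 2
  have h0count : 2 ≤ f.roots.count 0 := by
    rw [count_roots, le_rootMultiplicity_iff hfne]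
    have : ((X : Cv[X]) - C 0) ^ 2 = X ^ 2 := by simp
    rw [this, X_pow_dvd_iff]
    intro k hk
    interval_cases k
    · exact h0
    · exact h1
  have h0mem : (0:Cv) ∈ f.roots := by
    rw [← Multiset.count_pos]; omega
  -- the root of maximal norm
  have htfne : f.roots.toFinset.Nonempty := ⟨0, Multiset.mem_toFinset.mpr h0mem⟩
  obtain ⟨ζ, hζmem, hζmax⟩ := f.roots.toFinset.exists_max_image (fun a => ‖a‖) htfne
  have hζroots : ζ ∈ f.roots := Multiset.mem_toFinset.mp hζmem
  set M := ‖ζ‖ with hMdef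
  -- growth estimate outside the disk of radius max 1 M
  have hgrow : ∀ x : Cv, max 1 M < ‖x‖ → ‖f.eval x‖ = ‖x‖ ^ d := by
    intro x hx
    rw [hevalnorm x]
    have hrep : (f.roots.map fun a => ‖x - a‖) = Multiset.replicate d ‖x‖ := by
      rw [Multiset.eq_replicate]
      constructor
      · simpa using hcard
      · intro b hb
        obtain ⟨a, ha, rfl⟩ := Multiset.mem_map.mp hb
        have hax : ‖a‖ < ‖x‖ :=
          lt_of_le_of_lt (le_trans (hζmax a (Multiset.mem_toFinset.mpr ha))
            (le_max_right 1 M)) hx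
        exact us_norm_sub_eq hax
    rw [hrep, Multiset.prod_replicate]
  -- points of norm > max 1 M escape
  have hboundM : ∀ y : Cv,
      (∃ B : ℝ, ∀ n : ℕ, ‖(fun w => f.eval w)^[n] y‖ ≤ B) → ‖y‖ ≤ max 1 M := by
    rintro y ⟨B, hB⟩
    by_contra hy
    push_neg at hy
    have hy1 : 1 < ‖y‖ := lt_of_le_of_lt (le_max_left 1 M) hy
    have hit : ∀ n : ℕ, ‖y‖ ^ (n+1) ≤ ‖(fun w => f.eval w)^[n] y‖ := by
      intro n
      induction n with
      | zero => simpa using le_refl ‖y‖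
      | succ k ihk =>
        have hyk : ‖y‖ ≤ ‖y‖ ^ (k+1) := le_self_pow₀ hy1.le (Nat.succ_ne_zero k)
        have hbig : max 1 M < ‖(fun w => f.eval w)^[k] y‖ :=
          lt_of_lt_of_le hy (le_trans hyk ihk)
        have hx1 : 1 < ‖(fun w => f.eval w)^[k] y‖ :=
          lt_of_le_of_lt (le_max_left 1 M) hbig
        rw [Function.iterate_succ_apply', hgrow _ hbig]
        calc ‖y‖ ^ (k+1+1) = ‖y‖ ^ (k+1) * ‖y‖ := by ring
          _ ≤ ‖(fun w => f.eval w)^[k] y‖ * ‖(fun w => f.eval w)^[k] y‖ := by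
              apply mul_le_mul ihk (le_trans hyk ihk) (by positivity) (by positivity)
          _ = ‖(fun w => f.eval w)^[k] y‖ ^ 2 := (sq _).symm
          _ ≤ ‖(fun w => f.eval w)^[k] y‖ ^ d := pow_le_pow_right₀ hx1.le hd
    obtain ⟨n, hn⟩ := pow_unbounded_of_one_lt B hy1
    have h2 := hit n
    have h3 := hB n
    have h4 : ‖y‖ ^ n ≤ ‖y‖ ^ (n+1) := pow_le_pow_right₀ hy1.le (by omega)
    linarith
  have hmax1M : (0:ℝ) < max 1 M := lt_of_lt_of_le one_pos (le_max_left _ _)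
  have hEM : E ≤ max 1 M := by
    have hgle : gv ≤ Real.log (max 1 M) := by
      apply hK.2
      intro y hy
      rw [Real.exp_log hmax1M]
      exact hboundM y hy
    calc E ≤ Real.exp (Real.log (max 1 M)) := Real.exp_le_exp.mpr hgle
      _ = max 1 M := Real.exp_log hmax1M
  have hζE : ‖ζ‖ = E := by
    have hle : M ≤ E := hrootK ζ hζroots
    have hge : E ≤ M := by
      rcases le_max_iff.mp hEM with h | h
      · linarith
      · exact h
    exact le_antisymm hle hge
  -- z itself has norm at most E
  have hzle : ‖z‖ ≤ E := by
    by_contra h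
    push_neg at h
    have hmlt : max 1 M < ‖z‖ := by
      rw [max_lt_iff]
      constructor <;> [linarith; ·rw [← hMdef] at hζE; linarith]
    have hgz := hgrow z hmlt
    have h1z : 1 ≤ ‖z‖ := le_of_lt (lt_trans hE1 h)
    have : E < ‖f.eval z‖ := by
      rw [hgz]
      exact lt_of_lt_of_le h (le_self_pow₀ h1z (by omega))
    linarith
  -- Case A: all roots at distance exactly r from z
  by_cases hall : ∀ a ∈ f.roots, ‖z - a‖ = r
  · have hfzr : ‖f.eval z‖ = r ^ d := by
      rw [hevalnorm z]
      have hrep : (f.roots.map fun a => ‖z - a‖) = Multiset.replicate d r := by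
        rw [Multiset.eq_replicate]
        refine ⟨by simpa using hcard, ?_⟩
        intro b hb
        obtain ⟨a, ha, rfl⟩ := Multiset.mem_map.mp hb
        exact hall a ha
      rw [hrep, Multiset.prod_replicate]
    have hzr : ‖z‖ = r := by simpa using hall 0 h0mem
    have hEr : E ≤ r := by
      have hdζ : ‖z - ζ‖ = r := hall ζ hζroots
      calc E = ‖ζ‖ := hζE.symm
        _ = ‖(ζ - z) + z‖ := by ring_nf
        _ ≤ max ‖ζ - z‖ ‖z‖ := IsUltrametricDist.norm_add_le_max _ _
        _ ≤ r := by rw [norm_sub_rev, hdζ, hzr]; simp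
    have hrd : r ^ d ≤ r := le_trans (hfzr ▸ hfz) hEr
    have hlt : r < r ^ d := by
      calc r = r ^ 1 := (pow_one r).symm
        _ < r ^ d := pow_lt_pow_right₀ hcon (by omega)
    linarith
  -- Case B: some root not at distance r
  · push_neg at hall
    obtain ⟨a₀, ha₀mem, ha₀ne⟩ := hall
    set Bf := f.roots.toFinset.filter (fun a => ‖z - a‖ = r) with hBfdef
    have hBfcard : Bf.card < d := by
      have hsub : Bf ⊆ f.roots.toFinset.erase a₀ := by
        intro a ha
        rcases Finset.mem_filter.mp ha with ⟨hmem, heq⟩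
        refine Finset.mem_erase.mpr ⟨?_, hmem⟩
        rintro rfl
        exact ha₀ne heq
      have hlt1 : (f.roots.toFinset.erase a₀).card < f.roots.toFinset.card :=
        Finset.card_erase_lt_of_mem (Multiset.mem_toFinset.mpr ha₀mem)
      have hle2 : f.roots.toFinset.card ≤ d :=
        le_trans (Multiset.toFinset_card_le f.roots) (le_of_eq hcard)
      exact lt_of_le_of_lt (Finset.card_le_card hsub) (lt_of_lt_of_le hlt1 hle2)
    have hnat : ∀ m : ℕ, 1 ≤ m → m ≤ d → ‖(m : Cv)‖ = 1 := nat_norm_one hres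
    -- there is a good multiplier m
    have hgood : ∃ m ∈ Finset.Icc 1 d, ∀ a ∈ Bf, r ≤ ‖(z + (m:Cv) * (z' - z)) - a‖ := by
      by_contra hbad
      push_neg at hbad
      set ψ : ℕ → Cv := fun m =>
        if h : ∃ a ∈ Bf, ‖(z + (m:Cv) * (z' - z)) - a‖ < r then h.choose else 0 with hψdef
      have hψBf : ∀ m ∈ Finset.Icc 1 d, ψ m ∈ Bf := by
        intro m hm
        obtain ⟨a, haBf, halt⟩ := hbad m hm
        have hex : ∃ a ∈ Bf, ‖(z + (m:Cv) * (z' - z)) - a‖ < r := ⟨a, haBf, halt⟩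
        simp only [hψdef, dif_pos hex]
        exact hex.choose_spec.1
      have hψlt : ∀ m ∈ Finset.Icc 1 d, ‖(z + (m:Cv) * (z' - z)) - ψ m‖ < r := by
        intro m hm
        obtain ⟨a, haBf, halt⟩ := hbad m hm
        have hex : ∃ a ∈ Bf, ‖(z + (m:Cv) * (z' - z)) - a‖ < r := ⟨a, haBf, halt⟩
        simp only [hψdef, dif_pos hex]
        exact hex.choose_spec.2
      have hcards : Bf.card < (Finset.Icc 1 d).card := by
        rw [Nat.card_Icc]
        omega
      obtain ⟨m, hm, m', hm', hne, heq⟩ :=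
        Finset.exists_ne_map_eq_of_card_lt_of_maps_to hcards hψBf
      -- distance between the two candidate points is exactly r
      have hmm : ∀ {b c : ℕ}, b ∈ Finset.Icc 1 d → c ∈ Finset.Icc 1 d → c < b →
          ‖((b:Cv) - (c:Cv))‖ = 1 := by
        intro b c hb hc hlt
        rcases Finset.mem_Icc.mp hb with ⟨hb1, hb2⟩
        rcases Finset.mem_Icc.mp hc with ⟨hc1, hc2⟩
        have : ((b:Cv) - (c:Cv)) = (((b - c : ℕ)):Cv) := by
          push_cast [Nat.cast_sub hlt.le]
          ring
        rw [this]
        exact hnat (b - c) (by omega) (by omega)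
      have hdiff : ‖(z + (m:Cv) * (z' - z)) - (z + (m':Cv) * (z' - z))‖ = r := by
        have hexp : (z + (m:Cv) * (z' - z)) - (z + (m':Cv) * (z' - z))
            = ((m:Cv) - (m':Cv)) * (z' - z) := by ring
        rw [hexp, norm_mul]
        rcases lt_or_gt_of_ne hne with hlt | hlt
        · rw [norm_sub_rev, hmm hm' hm hlt, one_mul]
        · rw [hmm hm hm' hlt, one_mul]
      have hlt1 := hψlt m hm
      have hlt2 := hψlt m' hm'
      rw [heq] at hlt1
      have : ‖(z + (m:Cv) * (z' - z)) - (z + (m':Cv) * (z' - z))‖ < r := by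
        have hsplit : (z + (m:Cv) * (z' - z)) - (z + (m':Cv) * (z' - z))
            = ((z + (m:Cv) * (z' - z)) - ψ m') + (ψ m' - (z + (m':Cv) * (z' - z))) := by ring
        rw [hsplit]
        apply lt_of_le_of_lt (IsUltrametricDist.norm_add_le_max _ _)
        rw [max_lt_iff]
        exact ⟨hlt1, by rw [norm_sub_rev]; exact hlt2⟩
      linarith [hdiff ▸ this]
    obtain ⟨m, hmIcc, hmgood⟩ := hgood
    rcases Finset.mem_Icc.mp hmIcc with ⟨hm1, hm2⟩
    set w := z + (m:Cv) * (z' - z) with hwdef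
    have hwz : ‖w - z‖ = r := by
      have hexp : w - z = (m:Cv) * (z' - z) := by rw [hwdef]; ring
      rw [hexp, norm_mul, hnat m hm1 hm2, one_mul]
    have hfw : ‖f.eval w‖ ≤ E := hdisk w (le_of_eq hwz)
    -- each factor is at least max r ‖z - a‖
    have hfac : ∀ a ∈ f.roots, max r ‖z - a‖ ≤ ‖w - a‖ := by
      intro a ha
      have hsplit : w - a = (w - z) + (z - a) := by ring
      rcases lt_trichotomy ‖z - a‖ r with hlt | heq | hgt
      · have hwa : ‖w - a‖ = r := by
          rw [hsplit, IsUltrametricDist.norm_add_eq_max_of_norm_ne_norm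
            (by rw [hwz]; exact hlt.ne'), hwz]
          exact max_eq_left hlt.le
        rw [hwa]
        exact max_le le_rfl hlt.le
      · have haBf : a ∈ Bf := Finset.mem_filter.mpr ⟨Multiset.mem_toFinset.mpr ha, heq⟩
        rw [heq, max_self]
        exact hmgood a haBf
      · have hwa : ‖w - a‖ = ‖z - a‖ := by
          rw [hsplit, IsUltrametricDist.norm_add_eq_max_of_norm_ne_norm
            (by rw [hwz]; exact hgt.ne), hwz]
          exact max_eq_right hgt.le
        rw [hwa]
        exact max_le hgt.le le_rfl
    have hfac1 : ∀ a ∈ f.roots, (1:ℝ) ≤ ‖w - a‖ := fun a ha =>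
      le_trans (le_trans hcon.le (le_max_left _ _)) (hfac a ha)
    -- find a pair of roots giving factors at least E and r
    have hpair : ∃ x y : Cv, ({x, y} : Multiset Cv) ≤ f.roots ∧
        E ≤ ‖w - x‖ ∧ r ≤ ‖w - y‖ := by
      have h0fac : r ≤ ‖w - 0‖ := le_trans (le_max_left _ _) (hfac 0 h0mem)
      rcases eq_or_lt_of_le hzle with hze | hzlt
      · refine ⟨0, 0, ?_, ?_, h0fac⟩
        · have heq00 : f.roots = 0 ::ₘ f.roots.erase 0 := (Multiset.cons_erase h0mem).symm
          have hmem0 : (0:Cv) ∈ f.roots.erase 0 := by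
            rw [← Multiset.count_pos, Multiset.count_erase_self]
            omega
          rw [heq00]
          exact Multiset.cons_le_cons 0 (Multiset.singleton_le.mpr hmem0)
        · have hf0 := hfac 0 h0mem
          rw [sub_zero, sub_zero] at hf0
          rw [sub_zero]
          calc E = ‖z‖ := hze.symm
            _ ≤ max r ‖z‖ := le_max_right _ _
            _ ≤ ‖w‖ := hf0
      · have hζne0 : ζ ≠ 0 := by
          intro hh
          rw [hh] at hζE
          simp at hζE
          linarith
        refine ⟨ζ, 0, ?_, ?_, h0fac⟩
        · have heqζ : f.roots = ζ ::ₘ f.roots.erase ζ := (Multiset.cons_erase hζroots).symm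
          have hmem0 : (0:Cv) ∈ f.roots.erase ζ := by
            rw [← Multiset.count_pos, Multiset.count_erase_of_ne (Ne.symm hζne0)]
            omega
          rw [heqζ]
          exact Multiset.cons_le_cons ζ (Multiset.singleton_le.mpr hmem0)
        · have hzζ : ‖z - ζ‖ = E := by
            rw [norm_sub_rev]
            rw [us_norm_sub_eq (by rw [hζE]; exact hzlt)]
            exact hζE
          calc E = ‖z - ζ‖ := hzζ.symm
            _ ≤ max r ‖z - ζ‖ := le_max_right _ _
            _ ≤ ‖w - ζ‖ := hfac ζ hζroots
    obtain ⟨x, y, hxy, hEx, hry⟩ := hpair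
    have hmap : ({‖w - x‖, ‖w - y‖} : Multiset ℝ) ≤ f.roots.map (fun a => ‖w - a‖) := by
      have hm2 := Multiset.map_le_map (f := fun a => ‖w - a‖) hxy
      simpa using hm2
    have hprod : E * r ≤ ‖f.eval w‖ := by
      rw [hevalnorm w]
      refine le_trans ?_ (multiset_prod_ge ?_ hmap)
      · exact mul_le_mul hEx hry (by linarith) (norm_nonneg _)
      · intro u hu
        obtain ⟨a, ha, rfl⟩ := Multiset.mem_map.mp hu
        exact hfac1 a ha
    nlinarith
end
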